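/- arXiv:1711.08711 — 13 statements merged into one kernel-verified Lean document; each statement's English description precedes it below -/
import Mathlib

section
/- For any edge-colouring c : E(K↔_ℕ) → [r+1] of the complete symmetric digraph on ℕ for which there is no monochromatic directed path of edge-length ℓ_i in colour i for any i ∈ [r], there exists a monochromatic directed path in colour r+1 whose vertex set has upper density at least ∏_{i≤r} ℓ_i^{-1}. -/
/-- `l` is a finite directed path (a list of distinct vertices, with consecutive edges),
monochromatic in colour `j`, in the complete symmetric digraph on `V` edge-coloured by `c`.
Its edge-length is `l.length - 1`. -/
def IsMonoPathList {V : Type*} {N : ℕ} (c : V → V → Fin N) (j : Fin N) (l : List V) : Prop :=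
  l.Nodup ∧ l.Chain' fun u v => c u v = j

/-- `S` is the vertex set of a (finite or one-way infinite) directed path, monochromatic in
colour `j`, in the complete symmetric digraph on `V` edge-coloured by `c`. -/
def IsMonoPathSet {V : Type*} {N : ℕ} (c : V → V → Fin N) (j : Fin N) (S : Set V) : Prop :=
  (∃ l : List V, IsMonoPathList c j l ∧ S = {x | x ∈ l}) ∨
  (∃ f : ℕ → V, Function.Injective f ∧ (∀ n, c (f n) (f (n + 1)) = j) ∧ S = Set.range f)

/-- The upper density of a set `A ⊆ ℕ`: `limsup_{n → ∞} |A ∩ [n]| / n` where `[n] = {1, …, n}`. -/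
noncomputable def upperDensity (A : Set ℕ) : ℝ :=
  Filter.limsup (fun n : ℕ => ((A ∩ Set.Icc 1 n).ncard : ℝ) / (n : ℝ)) Filter.atTop

open Relation

private lemma aux_chain_to_last {α : Type*} (R : α → α → Prop) :
    ∀ (l : List α) (u : α), l.Chain' R → l.getLast? = some u →
      ∀ v ∈ l, v = u ∨ Relation.TransGen R v u := by
  intro l
  induction l with
  | nil => intro u _ _ v hv; simp at hv
  | cons a t ih =>
    intro u hch hlast v hv
    cases t with
    | nil =>
      simp at hlast hv
      left; rw [hv, hlast]
    | cons b t' =>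
      rw [List.Chain', List.isChain_cons_cons] at hch
      have hlast' : (b :: t').getLast? = some u := by
        simpa [List.getLast?_cons_cons] using hlast
      rcases List.mem_cons.1 hv with rfl | hv'
      · rcases ih u hch.2 hlast' b List.mem_cons_self with rfl | htg
        · right; exact TransGen.single hch.1
        · right; exact TransGen.head hch.1 htg
      · exact ih u hch.2 hlast' v hv'

private lemma aux_union_edge {α : Type*} {R : α → α → Prop} {u v : α}
    (hn : ¬ Relation.ReflTransGen R v u) :
    ∀ {a b}, Relation.TransGen (fun x y => R x y ∨ (x = u ∧ y = v)) a b →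
      Relation.TransGen R a b ∨ (Relation.ReflTransGen R a u ∧ Relation.ReflTransGen R v b) := by
  intro a b h
  induction h with
  | single hs =>
    rcases hs with hr | ⟨rfl, rfl⟩
    · exact Or.inl (TransGen.single hr)
    · exact Or.inr ⟨ReflTransGen.refl, ReflTransGen.refl⟩
  | tail hab hs ih =>
    rename_i b' c'
    rcases hs with hr | ⟨rfl, rfl⟩
    · rcases ih with h1 | ⟨h1, h2⟩
      · exact Or.inl (h1.tail hr)
      · exact Or.inr ⟨h1, h2.tail hr⟩
    · rcases ih with h1 | ⟨h1, h2⟩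
      · exact Or.inr ⟨h1.to_reflTransGen, ReflTransGen.refl⟩
      · exact absurd h2 hn

private lemma aux_transGen_sUnion {α : Type*} {C : Set (Set (α × α))} (hC : IsChain (· ⊆ ·) C)
    {a b : α} (h : Relation.TransGen (fun x y => ∃ S ∈ C, (x, y) ∈ S) a b) :
    ∃ S ∈ C, Relation.TransGen (fun x y => (x, y) ∈ S) a b := by
  induction h with
  | single hs => rcases hs with ⟨S, hS, hm⟩; exact ⟨S, hS, TransGen.single hm⟩
  | tail hab hs ih =>
    rcases ih with ⟨S1, hS1, h1⟩
    rcases hs with ⟨S2, hS2, hm⟩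
    rcases hC.total hS1 hS2 with hsub | hsub
    · exact ⟨S2, hS2, (TransGen.mono (fun x y hxy => hsub hxy) _ _ h1).tail hm⟩
    · exact ⟨S1, hS1, h1.tail (hsub hm)⟩

private lemma aux_transGen_exists {α : Type*} {r : α → α → Prop} {a b : α}
    (h : Relation.TransGen r a b) : ∃ x y, r x y := by
  induction h with
  | single hs => exact ⟨_, _, hs⟩
  | tail _ hs _ => exact ⟨_, _, hs⟩

/-- Gallai–Roy-type lemma for (possibly infinite) digraphs on `ℕ`: if every directed path
(nodup chain) in `E` has at most `L` vertices, then there is a proper "colouring" of the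
vertices with values in `{0, …, L-1}`. Proved by taking a maximal acyclic subrelation
(Zorn) and measuring longest paths ending at each vertex. -/
private lemma aux_colour_fn (E : ℕ → ℕ → Prop) (L : ℕ)
    (hbound : ∀ l : List ℕ, l.Nodup → l.Chain' E → l.length ≤ L) :
    ∃ g : ℕ → ℕ, (∀ v, g v < L) ∧ ∀ u v, u ≠ v → E u v → g u ≠ g v := by
  classical
  set 𝒮 : Set (Set (ℕ × ℕ)) :=
    {S | (∀ p ∈ S, E p.1 p.2 ∧ p.1 ≠ p.2) ∧
      ∀ x, ¬ Relation.TransGen (fun a b => (a, b) ∈ S) x x} with h𝒮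
  obtain ⟨R, -, hRmax⟩ : ∃ m, ∅ ⊆ m ∧ Maximal (· ∈ 𝒮) m := by
    apply zorn_subset_nonempty
    · intro C hC hchain hne
      refine ⟨⋃₀ C, ⟨?_, ?_⟩, fun s hs => Set.subset_sUnion_of_mem hs⟩
      · rintro p ⟨S, hS, hp⟩; exact (hC hS).1 p hp
      · intro x hx
        have hx' : Relation.TransGen (fun a b => ∃ S ∈ C, (a, b) ∈ S) x x := by
          refine TransGen.mono (fun a b hab => ?_) _ _ hx
          simpa [Set.mem_sUnion] using hab
        obtain ⟨S, hS, hcyc⟩ := aux_transGen_sUnion hchain hx'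
        exact (hC hS).2 x hcyc
    · refine ⟨fun p hp => absurd hp (Set.notMem_empty p), fun x hx => ?_⟩
      obtain ⟨a, b, hab⟩ := aux_transGen_exists hx
      exact Set.notMem_empty _ hab
  have hR𝒮 := hRmax.1
  set R' : ℕ → ℕ → Prop := fun a b => (a, b) ∈ R with hR'
  have hacyc : ∀ x, ¬ Relation.TransGen R' x x := hR𝒮.2
  set P : ℕ → Set ℕ := fun v => {n | ∃ l : List ℕ,
    (l ++ [v]).Nodup ∧ (l ++ [v]).Chain' R' ∧ l.length = n} with hP
  have hPne : ∀ v, (P v).Nonempty := fun v => ⟨0, [], by simp, List.isChain_singleton v, rfl⟩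
  have hPlt : ∀ v, ∀ n ∈ P v, n < L := by
    rintro v n ⟨l, hnd, hch, rfl⟩
    have hEc : (l ++ [v]).Chain' E := hch.imp fun a b hab => (hR𝒮.1 _ hab).1
    have := hbound _ hnd hEc
    simp only [List.length_append, List.length_cons, List.length_nil] at this
    omega
  have hPbdd : ∀ v, BddAbove (P v) := fun v => ⟨L, fun n hn => (hPlt v n hn).le⟩
  set g : ℕ → ℕ := fun v => sSup (P v) with hg
  have hgmem : ∀ v, g v ∈ P v := fun v => Nat.sSup_mem (hPne v) (hPbdd v)
  have hglt : ∀ v, g v < L := fun v => hPlt v _ (hgmem v)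
  have hstep : ∀ u v, R' u v → g u < g v := by
    intro u v huv
    obtain ⟨l, hnd, hch, hlen⟩ := hgmem u
    have hvnm : v ∉ l ++ [u] := by
      intro hvm
      rcases aux_chain_to_last R' (l ++ [u]) u hch (by simp) v hvm with rfl | htg
      · exact hacyc v (TransGen.single huv)
      · exact hacyc v (htg.tail huv)
    have hndv : ((l ++ [u]) ++ [v]).Nodup := by
      refine hnd.append (List.nodup_singleton v) ?_
      intro a ha hav
      rw [List.mem_singleton] at hav
      subst hav; exact hvnm ha
    have hchv : ((l ++ [u]) ++ [v]).Chain' R' :=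
      List.isChain_append.2 ⟨hch, List.isChain_singleton v, by
        simp only [List.getLast?_concat, List.head?_cons, Option.mem_def,
          Option.some.injEq]
        rintro x rfl y rfl; exact huv⟩
    have hmem : g u + 1 ∈ P v :=
      ⟨l ++ [u], hndv, hchv, by simp [hlen]⟩
    have h1 := le_csSup (hPbdd v) hmem
    exact lt_of_lt_of_le (Nat.lt_succ_self _) h1
  have htrans : ∀ u v, Relation.TransGen R' u v → g u < g v := by
    intro u v h
    induction h with
    | single hs => exact hstep _ _ hs
    | tail _ hs ih => exact ih.trans (hstep _ _ hs)
  refine ⟨g, hglt, fun u v hne hE => ?_⟩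
  by_cases hmem : (u, v) ∈ R
  · exact (hstep u v hmem).ne
  · have hback : Relation.TransGen R' v u := by
      have hS : insert (u, v) R ∉ 𝒮 := by
        intro hin
        have := hRmax.2 hin (Set.subset_insert _ _)
        exact hmem (this (Set.mem_insert _ _))
      have hcyc : ∃ w, Relation.TransGen
          (fun a b => R' a b ∨ (a = u ∧ b = v)) w w := by
        rw [h𝒮, Set.mem_setOf_eq, not_and_or] at hS
        rcases hS with hS | hS
        · exfalso
          apply hS
          rintro p hp
          rcases Set.mem_insert_iff.1 hp with rfl | hp
          · exact ⟨hE, hne⟩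
          · exact hR𝒮.1 p hp
        · push_neg at hS
          obtain ⟨w, hw⟩ := hS
          refine ⟨w, TransGen.mono (fun a b hab => ?_) _ _ hw⟩
          rcases Set.mem_insert_iff.1 hab with h | h
          · exact Or.inr ⟨congrArg Prod.fst h, congrArg Prod.snd h⟩
          · exact Or.inl h
      obtain ⟨w, hw⟩ := hcyc
      by_cases hrtg : Relation.ReflTransGen R' v u
      · rcases (Relation.reflTransGen_iff_eq_or_transGen.1 hrtg) with rfl | h
        · exact absurd rfl hne
        · exact h
      · exfalso
        rcases aux_union_edge hrtg hw with h | ⟨h1, h2⟩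
        · exact hacyc w h
        · exact hrtg (h2.trans h1)
    exact (htrans v u hback).ne'

/-- For any `(r+1)`-edge-colouring of the complete symmetric digraph on `ℕ` with no
monochromatic directed path of edge-length `ℓ i` in colour `i` for any `i ∈ [r]`, there is
a monochromatic directed path in colour `r+1` whose vertex set has upper density at least
`(∏ i, ℓ i)⁻¹`. -/
theorem monochromatic_path_upperDensity (r : ℕ) (c : ℕ → ℕ → Fin (r + 1))
    (ℓ : Fin r → ℕ) (hℓ : ∀ i, 0 < ℓ i)
    (hno : ∀ i : Fin r,
      ¬ ∃ l : List ℕ, IsMonoPathList c i.castSucc l ∧ l.length = ℓ i + 1) :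
    ∃ S : Set ℕ, IsMonoPathSet c (Fin.last r) S ∧
      (∏ i, (ℓ i : ℝ))⁻¹ ≤ upperDensity S := by
  classical
  have hbound : ∀ i : Fin r, ∀ l : List ℕ, l.Nodup →
      (l.Chain' fun u v => c u v = i.castSucc) → l.length ≤ ℓ i := by
    intro i l hnd hch
    by_contra hlen
    push_neg at hlen
    refine hno i ⟨l.take (ℓ i + 1), ⟨hnd.sublist (List.take_sublist _ _), hch.take _⟩, ?_⟩
    rw [List.length_take]
    omega
  have H : ∀ i : Fin r, ∃ g : ℕ → ℕ, (∀ v, g v < ℓ i) ∧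
      ∀ u v, u ≠ v → c u v = i.castSucc → g u ≠ g v :=
    fun i => aux_colour_fn _ _ (hbound i)
  choose g hglt hgne using H
  set G : ℕ → (∀ i : Fin r, Fin (ℓ i)) := fun v i => ⟨g i v, hglt i v⟩ with hG
  set k : ℕ := ∏ i, ℓ i with hk
  have hkpos : 0 < k := Finset.prod_pos fun i _ => hℓ i
  have hcardα : Fintype.card (∀ i : Fin r, Fin (ℓ i)) = k := by
    simp [hk, Fintype.card_pi]
  have hne : Nonempty (∀ i : Fin r, Fin (ℓ i)) := ⟨fun i => ⟨0, hℓ i⟩⟩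
  have hstep : ∀ n : ℕ, ∃ a : ∀ i : Fin r, Fin (ℓ i),
      n ≤ k * ((Finset.Icc 1 n).filter (fun m => G m = a)).card := by
    intro n
    have hsum : (Finset.Icc 1 n).card
        = ∑ a : (∀ i : Fin r, Fin (ℓ i)), ((Finset.Icc 1 n).filter (fun m => G m = a)).card :=
      Finset.card_eq_sum_card_fiberwise fun x _ => Finset.mem_univ _
    have hIcc : (Finset.Icc 1 n).card = n := by
      rw [Nat.card_Icc]; omega
    have h2 : ∑ _a : (∀ i : Fin r, Fin (ℓ i)), n
        ≤ ∑ a : (∀ i : Fin r, Fin (ℓ i)), k * ((Finset.Icc 1 n).filter (fun m => G m = a)).card := by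
      rw [← Finset.mul_sum, ← hsum, hIcc, Finset.sum_const, Finset.card_univ, hcardα, smul_eq_mul]
    obtain ⟨a, -, ha⟩ := Finset.exists_le_of_sum_le Finset.univ_nonempty h2
    exact ⟨a, ha⟩
  choose a ha using hstep
  obtain ⟨y, hy⟩ := Finite.exists_infinite_fiber a
  have hyinf : {n | a n = y}.Infinite := by
    rw [← Set.infinite_coe_iff] at *
    exact hy
  set A : Set ℕ := {v | G v = y} with hA
  have hdn : ∀ n, (A ∩ Set.Icc 1 n).ncard = ((Finset.Icc 1 n).filter (fun m => G m = y)).card := by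
    intro n
    rw [← Set.ncard_coe_finset]
    congr 1
    ext m
    simp [hA, and_comm]
  have hAinf : A.Infinite := by
    by_contra hfin
    rw [Set.not_infinite] at hfin
    obtain ⟨n, hn, hngt⟩ := hyinf.exists_gt (k * A.ncard)
    have h1 := ha n
    rw [hn, ← hdn] at h1
    have h2 : (A ∩ Set.Icc 1 n).ncard ≤ A.ncard :=
      Set.ncard_le_ncard Set.inter_subset_left hfin
    have := h1.trans (Nat.mul_le_mul_left k h2)
    omega
  refine ⟨A, ?_, ?_⟩
  · right
    have hAinf' : (setOf (· ∈ A)).Infinite := hAinf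
    refine ⟨Nat.nth (· ∈ A), Nat.nth_injective hAinf', ?_,
      (Nat.range_nth_of_infinite hAinf').symm⟩
    intro n
    set u := Nat.nth (· ∈ A) n
    set v := Nat.nth (· ∈ A) (n + 1)
    have hu : u ∈ A := Nat.nth_mem_of_infinite hAinf' n
    have hv : v ∈ A := Nat.nth_mem_of_infinite hAinf' (n + 1)
    have huv : u ≠ v := fun h => by
      have := Nat.nth_injective hAinf' h
      omega
    by_contra hlast
    obtain ⟨i, hi⟩ := Fin.exists_castSucc_eq.2 hlast
    refine hgne i u v huv hi.symm ?_
    rw [hA] at hu hv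
    have h3 := congrFun (hu.trans hv.symm) i
    rw [hG] at h3
    simpa using h3
  · have hℓr : (∏ i, (ℓ i : ℝ)) = (k : ℝ) := by
      rw [hk]; push_cast; rfl
    rw [hℓr, upperDensity]
    have hbdd : Filter.IsBoundedUnder (· ≤ ·) Filter.atTop
        (fun n : ℕ => ((A ∩ Set.Icc 1 n).ncard : ℝ) / (n : ℝ)) := by
      refine Filter.isBoundedUnder_of ⟨1, fun n => ?_⟩
      rcases Nat.eq_zero_or_pos n with rfl | hn
      · simp
      · rw [div_le_one (by exact_mod_cast hn)]
        have h1 : (A ∩ Set.Icc 1 n).ncard ≤ (Set.Icc 1 n).ncard :=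
          Set.ncard_le_ncard Set.inter_subset_right (Set.finite_Icc _ _)
        have h2 : (Set.Icc 1 n).ncard = n := by
          rw [show Set.Icc 1 n = ↑(Finset.Icc 1 n) by simp, Set.ncard_coe_finset,
            Nat.card_Icc]
          omega
        exact_mod_cast h2 ▸ Nat.cast_le.2 h1
    refine Filter.le_limsup_of_frequently_le ?_ hbdd
    rw [Nat.frequently_atTop_iff_infinite]
    refine (hyinf.diff (Set.finite_singleton 0)).mono ?_
    rintro n ⟨hn, hn0⟩
    simp only [Set.mem_singleton_iff] at hn0
    have hnpos : 0 < n := Nat.pos_of_ne_zero hn0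
    have h := ha n
    rw [Set.mem_setOf_eq] at hn
    rw [hn, ← hdn] at h
    simp only [Set.mem_setOf_eq]
    rw [inv_eq_one_div, div_le_div_iff₀ (by exact_mod_cast hkpos) (by exact_mod_cast hnpos)]
    rw [one_mul, mul_comm]
    exact_mod_cast h
end

section
/- Let G be a complete symmetric digraph, either finite or countably infinite. For every edge-colouring c : E(G) → [r+1] for which there is no monochromatic directed path of edge-length ℓ_i in colour i for any i ∈ [r], the vertex set of G can be covered by ∏_{i≤r} ℓ_i pairwise vertex-disjoint monochromatic directed paths in colour r+1. -/
open Relation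

section Aux

variable {V : Type*}

private lemma chain_transGen {A : V → V → Prop} : ∀ {l : List V} {x y : V},
    List.Chain A x l → y ∈ l → TransGen A x y := by
  intro l
  induction l with
  | nil => simp
  | cons b t ih =>
    intro x y hc hy
    simp only [List.Chain, List.chain_cons] at hc
    rcases List.mem_cons.mp hy with rfl | hy
    · exact TransGen.single hc.1
    · exact (ih hc.2 hy).head hc.1

private lemma cycle_of_not_nodup {A : V → V → Prop} : ∀ {l : List V},
    List.Chain' A l → ¬ l.Nodup → ∃ x, TransGen A x x := by
  intro l
  induction l with
  | nil => simp
  | cons a t ih =>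
    intro hc hnd
    by_cases ha : a ∈ t
    · exact ⟨a, chain_transGen hc ha⟩
    · refine ih hc.tail ?_
      intro hnt
      exact hnd (List.nodup_cons.mpr ⟨ha, hnt⟩)

private lemma transGen_insert {A : V → V → Prop} {u v x y : V}
    (h : TransGen (fun a b => A a b ∨ (a = u ∧ b = v)) x y) :
    TransGen A x y ∨ (ReflTransGen A x u ∧ ReflTransGen A v y) := by
  induction h with
  | single hstep =>
    rcases hstep with h | ⟨rfl, rfl⟩
    · exact Or.inl (TransGen.single h)
    · exact Or.inr ⟨ReflTransGen.refl, ReflTransGen.refl⟩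
  | tail hxb hstep ih =>
    rcases hstep with h | ⟨rfl, rfl⟩
    · rcases ih with h1 | ⟨h1, h2⟩
      · exact Or.inl (h1.tail h)
      · exact Or.inr ⟨h1, h2.tail h⟩
    · rcases ih with h1 | ⟨h1, _⟩
      · exact Or.inr ⟨h1.to_reflTransGen, ReflTransGen.refl⟩
      · exact Or.inr ⟨h1, ReflTransGen.refl⟩

private lemma transGen_sUnion {ch : Set (Set (V × V))} (hch : IsChain (· ⊆ ·) ch) {x y : V}
    (h : TransGen (fun a b => ∃ A ∈ ch, (a, b) ∈ A) x y) :
    ∃ A ∈ ch, TransGen (fun a b => (a, b) ∈ A) x y := by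
  induction h with
  | single hs =>
    obtain ⟨A, hA, hp⟩ := hs
    exact ⟨A, hA, TransGen.single hp⟩
  | tail hxb hs ih =>
    obtain ⟨A₁, hA₁, h₁⟩ := ih
    obtain ⟨A₂, hA₂, hp⟩ := hs
    by_cases he : A₁ = A₂
    · subst he; exact ⟨A₁, hA₁, h₁.tail hp⟩
    rcases hch.total hA₁ hA₂ with hsub | hsub
    · exact ⟨A₂, hA₂, (TransGen.mono (fun a b hab => hsub hab) _ _ h₁).tail hp⟩
    · exact ⟨A₁, hA₁, h₁.tail (hsub hp)⟩

/-- Abstract Gallai–Roy: if every `R`-chain with distinct vertices has at most `m`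
vertices, there is a level function `φ : V → Fin m`-valued separating `R`-edges. -/
private lemma exists_level (R : V → V → Prop) (m : ℕ) (hm : 0 < m)
    (hbound : ∀ l : List V, l.Nodup → l.Chain' R → l.length ≤ m) :
    ∃ φ : V → ℕ, (∀ v, φ v < m) ∧ ∀ u v, u ≠ v → R u v → φ u ≠ φ v := by
  classical
  -- the set of acyclic sub-arc-sets of R (with loops removed)
  set 𝒜 : Set (Set (V × V)) :=
    {A | (∀ p ∈ A, R p.1 p.2 ∧ p.1 ≠ p.2) ∧
      ∀ x : V, ¬ TransGen (fun a b => (a, b) ∈ A) x x} with h𝒜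
  have hempty : (∅ : Set (V × V)) ∈ 𝒜 := by
    constructor
    · simp
    · intro x hx
      cases hx with
      | single h => exact h
      | tail _ h => exact h
  have hub : ∀ ch ⊆ 𝒜, IsChain (· ⊆ ·) ch → ch.Nonempty →
      ∃ ub ∈ 𝒜, ∀ s ∈ ch, s ⊆ ub := by
    intro ch hch hchain hne
    refine ⟨⋃₀ ch, ⟨?_, ?_⟩, fun s hs => Set.subset_sUnion_of_mem hs⟩
    · rintro p ⟨A, hA, hp⟩
      exact (hch hA).1 p hp
    · intro x hx
      have hx' : TransGen (fun a b => ∃ A ∈ ch, (a, b) ∈ A) x x := by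
        refine TransGen.mono (fun a b hab => ?_) _ _ hx
        simpa using hab
      obtain ⟨A, hA, hxx⟩ := transGen_sUnion hchain hx'
      exact (hch hA).2 x hxx
  obtain ⟨A, -, hAmax⟩ := zorn_subset_nonempty 𝒜 hub ∅ hempty
  have hAmem : A ∈ 𝒜 := hAmax.1
  set Arel : V → V → Prop := fun a b => (a, b) ∈ A with hArel
  have hAR : ∀ a b, Arel a b → R a b ∧ a ≠ b := fun a b h => hAmem.1 (a, b) h
  have hacyc : ∀ x, ¬ TransGen Arel x x := hAmem.2
  -- level sets
  set L : V → Set ℕ := fun v =>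
    {n | ∃ l : List V, l.Chain' Arel ∧ l.getLast? = some v ∧ l.length = n + 1} with hL
  have hLne : ∀ v, (L v).Nonempty := by
    intro v
    exact ⟨0, [v], List.isChain_singleton v, rfl, rfl⟩
  have hLlt : ∀ v, ∀ n ∈ L v, n < m := by
    rintro v n ⟨l, hc, -, hlen⟩
    have hnd : l.Nodup := by
      by_contra hnd
      obtain ⟨x, hx⟩ := cycle_of_not_nodup hc hnd
      exact hacyc x hx
    have := hbound l hnd (hc.imp fun a b h => (hAR a b h).1)
    omega
  have hLbdd : ∀ v, BddAbove (L v) := fun v => ⟨m, fun n hn => (hLlt v n hn).le⟩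
  set φ : V → ℕ := fun v => sSup (L v) with hφ
  have hφmem : ∀ v, φ v ∈ L v := fun v => Nat.sSup_mem (hLne v) (hLbdd v)
  have hφlt : ∀ v, φ v < m := fun v => hLlt v (φ v) (hφmem v)
  -- step lemma
  have hstep : ∀ u v, Arel u v → φ u < φ v := by
    intro u v huv
    obtain ⟨l, hc, hlast, hlen⟩ := hφmem u
    have hmem : φ u + 1 ∈ L v := by
      refine ⟨l ++ [v], ?_, List.getLast?_concat (l := l), by simp [hlen]⟩
      refine List.isChain_append.mpr ⟨hc, List.isChain_singleton v, ?_⟩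
      intro x hx y hy
      rw [hlast] at hx
      simp only [List.head?_cons, Option.mem_def, Option.some.injEq] at hx hy
      subst hx; subst hy
      exact huv
    have hle := le_csSup (hLbdd v) hmem
    exact lt_of_lt_of_le (Nat.lt_succ_self _) hle
  have htrans : ∀ u v, TransGen Arel u v → φ u < φ v := by
    intro u v h
    induction h with
    | single h => exact hstep _ _ h
    | tail _ h ih => exact ih.trans (hstep _ _ h)
  refine ⟨φ, hφlt, ?_⟩
  intro u v huv hR
  by_cases hA : Arel u v
  · exact (hstep u v hA).ne
  · -- insert (u,v) creates a cycle by maximality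
    have hvu : TransGen Arel v u := by
      have hnot : insert (u, v) A ∉ 𝒜 := by
        intro hmem
        have := hAmax.2 hmem (Set.subset_insert _ _)
        have : (u, v) ∈ A := this (Set.mem_insert _ _)
        exact hA this
      have : ∃ x, TransGen (fun a b => (a, b) ∈ insert (u, v) A) x x := by
        by_contra hcon
        push_neg at hcon
        refine hnot ⟨?_, hcon⟩
        rintro p hp
        rcases Set.mem_insert_iff.mp hp with rfl | hp
        · exact ⟨hR, huv⟩
        · exact hAmem.1 p hp
      obtain ⟨x, hx⟩ := this
      have hx' : TransGen (fun a b => Arel a b ∨ (a = u ∧ b = v)) x x := by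
        refine TransGen.mono (fun a b hab => ?_) _ _ hx
        rcases Set.mem_insert_iff.mp hab with h | h
        · exact Or.inr ⟨congrArg Prod.fst h, congrArg Prod.snd h⟩
        · exact Or.inl h
      rcases transGen_insert hx' with h | ⟨h1, h2⟩
      · exact absurd h (hacyc x)
      · have hvu' : ReflTransGen Arel v u := h2.trans h1
        rcases hvu'.cases_head with h | ⟨b, hb, hbu⟩
        · exact absurd h.symm huv
        · exact TransGen.head' hb hbu
    exact (htrans v u hvu).ne'

private lemma isMonoPathSet_of [Countable V] {N : ℕ} (c : V → V → Fin N) (j : Fin N)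
    (S : Set V) (hS : ∀ u ∈ S, ∀ v ∈ S, u ≠ v → c u v = j) : IsMonoPathSet c j S := by
  classical
  by_cases hfin : S.Finite
  · left
    refine ⟨hfin.toFinset.toList, ⟨Finset.nodup_toList _, ?_⟩, ?_⟩
    · refine List.Pairwise.isChain ?_
      have hnd : hfin.toFinset.toList.Pairwise (· ≠ ·) := Finset.nodup_toList _
      refine (List.Pairwise.and_mem.mp hnd).imp ?_
      rintro a b ⟨ha, hb, hab⟩
      have ha' : a ∈ S := by
        have := Finset.mem_toList.mp ha; exact hfin.mem_toFinset.mp this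
      have hb' : b ∈ S := by
        have := Finset.mem_toList.mp hb; exact hfin.mem_toFinset.mp this
      exact hS a ha' b hb' hab
    · ext x
      simp [Finset.mem_toList, hfin.mem_toFinset]
  · right
    have hcnt : Countable ↥S := (Set.to_countable S).to_subtype
    have hinf : Infinite ↥S := Set.infinite_coe_iff.mpr hfin
    obtain ⟨d⟩ := nonempty_denumerable (↥S)
    set e : ℕ ≃ ↥S := (Denumerable.eqv ↥S).symm with he
    refine ⟨fun n => (e n : V), ?_, ?_, ?_⟩
    · intro a b hab
      exact e.injective (Subtype.ext hab)
    · intro n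
      have hne : ((e n : V)) ≠ ((e (n + 1) : V)) := by
        intro h
        have := e.injective (Subtype.ext h)
        omega
      exact hS _ (e n).2 _ (e (n + 1)).2 hne
    · ext x
      constructor
      · intro hx
        exact ⟨e.symm ⟨x, hx⟩, by simp⟩
      · rintro ⟨n, rfl⟩
        exact (e n).2

end Aux

/-- Let `G` be a complete symmetric digraph, finite or countably infinite (vertex type `V`
countable). For every `(r+1)`-edge-colouring with no monochromatic directed path of
edge-length `ℓ i` in colour `i` for any `i ∈ [r]`, the vertex set can be covered by
`∏ i, ℓ i` pairwise disjoint monochromatic directed paths in colour `r+1`. -/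
theorem decomposition_countable {V : Type*} [Countable V] (r : ℕ)
    (c : V → V → Fin (r + 1)) (ℓ : Fin r → ℕ) (hℓ : ∀ i, 0 < ℓ i)
    (hno : ∀ i : Fin r,
      ¬ ∃ l : List V, IsMonoPathList c i.castSucc l ∧ l.length = ℓ i + 1) :
    ∃ P : Fin (∏ i, ℓ i) → Set V,
      (∀ k, IsMonoPathSet c (Fin.last r) (P k)) ∧
      (Pairwise fun a b => Disjoint (P a) (P b)) ∧
      (⋃ k, P k) = Set.univ := by
  classical
  -- level functions for each colour i < r
  have hlev : ∀ i : Fin r, ∃ φ : V → ℕ, (∀ v, φ v < ℓ i) ∧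
      ∀ u v, u ≠ v → c u v = i.castSucc → φ u ≠ φ v := by
    intro i
    refine exists_level (fun u v => c u v = i.castSucc) (ℓ i) (hℓ i) ?_
    intro l hnd hc
    by_contra hlen
    push_neg at hlen
    refine hno i ⟨l.take (ℓ i + 1), ⟨hnd.sublist (List.take_sublist _ _), hc.take _⟩, ?_⟩
    rw [List.length_take]
    omega
  choose φ hφlt hφne using hlev
  -- the combined level function
  set Φ : V → (∀ i : Fin r, Fin (ℓ i)) := fun v i => ⟨φ i v, hφlt i v⟩ with hΦ
  refine ⟨fun k => {v | finPiFinEquiv (Φ v) = k}, ?_, ?_, ?_⟩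
  · intro k
    refine isMonoPathSet_of c (Fin.last r) _ ?_
    intro u hu v hv huv
    by_contra hcuv
    have hlt : (c u v : ℕ) < r := by
      have h1 : (c u v : ℕ) < r + 1 := (c u v).2
      have h2 : (c u v : ℕ) ≠ r := fun h => hcuv (Fin.ext h)
      omega
    set i : Fin r := ⟨(c u v : ℕ), hlt⟩ with hi
    have hci : c u v = i.castSucc := by
      apply Fin.ext
      simp [hi, Fin.castSucc]
    have hne := hφne i u v huv hci
    have hΦeq : Φ u = Φ v := by
      have := hu.trans hv.symm
      exact finPiFinEquiv.injective this
    have := congrFun hΦeq i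
    exact hne (congrArg Fin.val this)
  · intro a b hab
    refine Set.disjoint_left.mpr ?_
    rintro v hva hvb
    exact hab (hva.symm.trans hvb)
  · ext v
    simp only [Set.mem_iUnion, Set.mem_setOf_eq, Set.mem_univ, iff_true]
    exact ⟨finPiFinEquiv (Φ v), rfl⟩
end

section
/- Let T be a finite tournament and c : E(T) → [r] an edge-colouring such that there is no monochromatic directed path of edge-length ℓ_i in colour i for any i ∈ [r]. Then T has at most ∏_{i≤r} ℓ_i vertices. -/
open Relation

private lemma aux_chain_reach {V : Type*} {R : V → V → Prop} :
    ∀ (l : List V) (a v : V), l.Chain' R → a ∈ l → l.getLast? = some v →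
      ReflTransGen R a v := by
  intro l
  induction l with
  | nil => intro a v _ h; simp at h
  | cons b t ih =>
    intro a v hc hm hl
    cases t with
    | nil =>
      simp at hm hl
      subst hm; subst hl; exact ReflTransGen.refl
    | cons c t' =>
      replace hc := List.isChain_cons_cons.1 hc
      rw [List.getLast?_cons_cons] at hl
      rcases List.mem_cons.1 hm with h | h
      · subst h
        exact ReflTransGen.head hc.1 (ih c v hc.2 List.mem_cons_self hl)
      · exact ih a v hc.2 h hl

private lemma aux_transGen_insert {V : Type*} {R : V → V → Prop} {u v x y : V}
    (h : TransGen (fun a b => R a b ∨ (a = u ∧ b = v)) x y) :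
    TransGen R x y ∨ (ReflTransGen R x u ∧ ReflTransGen R v y) := by
  induction h with
  | single e =>
    rcases e with e | ⟨rfl, rfl⟩
    · exact Or.inl (TransGen.single e)
    · exact Or.inr ⟨ReflTransGen.refl, ReflTransGen.refl⟩
  | tail _ e ih =>
    rcases ih with ih | ⟨h1, h2⟩
    · rcases e with e | ⟨rfl, rfl⟩
      · exact Or.inl (ih.tail e)
      · exact Or.inr ⟨ih.to_reflTransGen, ReflTransGen.refl⟩
    · rcases e with e | ⟨rfl, rfl⟩
      · exact Or.inr ⟨h1, h2.tail e⟩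
      · exact Or.inr ⟨h1, ReflTransGen.refl⟩

private lemma aux_colouring {V : Type*} [Fintype V] (D : V → V → Prop) (m : ℕ)
    (hno : ¬ ∃ l : List V, l.Nodup ∧ l.Chain' D ∧ l.length = m + 1) :
    ∃ g : V → ℕ, (∀ v, g v < m) ∧ ∀ u v, D u v → u ≠ v → g u ≠ g v := by
  classical
  -- maximal acyclic subrelation
  obtain ⟨S, -, hS⟩ := Finite.exists_le_maximal (a := (∅ : Set (V × V)))
    (p := fun S : Set (V × V) => (∀ p ∈ S, D p.1 p.2) ∧
      ∀ w, ¬ TransGen (fun a b => (a, b) ∈ S) w w)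
    (by
      refine ⟨by simp, fun w hw => ?_⟩
      cases hw with
      | single e => exact e
      | tail _ e => exact e)
  set R : V → V → Prop := fun a b => (a, b) ∈ S with hR
  have hSD : ∀ a b, R a b → D a b := fun a b h => hS.prop.1 (a, b) h
  have hacy : ∀ w, ¬ TransGen R w w := hS.prop.2
  set P : V → ℕ → Prop := fun v n => ∃ l : List V, l.Nodup ∧ l.Chain' R ∧
    l.getLast? = some v ∧ l.length = n + 1 with hPdef
  set f : V → ℕ := fun v => Nat.findGreatest (P v) (Fintype.card V) with hfdef
  have hP0 : ∀ v, P v 0 := fun v => ⟨[v], by simp, List.isChain_singleton v, by simp, by simp⟩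
  have hf_spec : ∀ v, P v (f v) := fun v =>
    Nat.findGreatest_spec (Nat.zero_le _) (hP0 v)
  have hstep : ∀ a b, R a b → f a < f b := by
    intro a b hab
    obtain ⟨l, hnd, hch, hlast, hlen⟩ := hf_spec a
    have hb : b ∉ l := by
      intro hb
      exact hacy b (TransGen.tail' (aux_chain_reach l b a hch hb hlast) hab)
    have hnd' : (l ++ [b]).Nodup := by
      rw [List.nodup_append]
      exact ⟨hnd, by simp, by intro x hx y hy hxy; simp at hy; subst hy; exact hb (hxy ▸ hx)⟩
    have hch' : (l ++ [b]).Chain' R := by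
      refine List.isChain_append.2 ⟨hch, List.isChain_singleton b, ?_⟩
      intro x hx y hy
      rw [hlast] at hx
      simp at hx hy
      subst hx; subst hy; exact hab
    have hlast' : (l ++ [b]).getLast? = some b := by
      rw [List.getLast?_append_of_ne_nil _ (by simp)]; simp
    have hlen' : (l ++ [b]).length = (f a + 1) + 1 := by simp [hlen]
    have hcard : f a + 1 + 1 ≤ Fintype.card V := hlen' ▸ hnd'.length_le_card
    have : f a + 1 ≤ f b :=
      Nat.le_findGreatest (le_trans (Nat.le_succ _) hcard) ⟨l ++ [b], hnd', hch', hlast', hlen'⟩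
    omega
  have hmono : ∀ a b, TransGen R a b → f a < f b := by
    intro a b h
    induction h with
    | single e => exact hstep _ _ e
    | tail _ e ih => exact lt_trans ih (hstep _ _ e)
  have hbound : ∀ v, f v < m := by
    intro v
    by_contra h
    push_neg at h
    obtain ⟨l, hnd, hch, -, hlen⟩ := hf_spec v
    refine hno ⟨l.take (m + 1), hnd.sublist (List.take_sublist _ _),
      (hch.take _).imp (fun {a b} => hSD a b), ?_⟩
    rw [List.length_take, hlen]
    omega
  refine ⟨f, hbound, fun u v huv hne hfe => ?_⟩
  by_cases hRuv : R u v
  · exact absurd hfe (Nat.ne_of_lt (hstep _ _ hRuv))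
  · have hnp : ¬ ((∀ p ∈ insert (u, v) S, D p.1 p.2) ∧
        ∀ w, ¬ TransGen (fun a b => (a, b) ∈ insert (u, v) S) w w) := by
      intro hp
      exact hRuv (hS.2 hp (Set.subset_insert _ _) (Set.mem_insert _ _))
    have h1 : ∀ p ∈ insert (u, v) S, D p.1 p.2 := by
      rintro ⟨a, b⟩ hp
      rcases Set.mem_insert_iff.1 hp with h | h
      · obtain ⟨rfl, rfl⟩ := Prod.mk.injEq .. ▸ h; exact huv
      · exact hSD a b h
    push_neg at hnp
    obtain ⟨w, hw⟩ := hnp h1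
    have hw' : TransGen (fun a b => R a b ∨ (a = u ∧ b = v)) w w := by
      refine TransGen.mono (fun a b hab => ?_) w w hw
      rcases Set.mem_insert_iff.1 hab with h | h
      · exact Or.inr (by simpa [Prod.ext_iff] using h)
      · exact Or.inl h
    rcases aux_transGen_insert hw' with h | ⟨hwu, hvw⟩
    · exact hacy w h
    · have hvu : ReflTransGen R v u := hvw.trans hwu
      rcases reflTransGen_iff_eq_or_transGen.1 hvu with h | h
      · exact hne h
      · exact absurd hfe.symm (Nat.ne_of_lt (hmono _ _ h))

/-- A finite tournament `(V, E)` (`E` irreflexive, exactly one direction between any two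
distinct vertices), edge-coloured by `c : V → V → Fin r`, with no monochromatic directed
path of edge-length `ℓ i` in colour `i` for any `i`, has at most `∏ i, ℓ i` vertices.
A directed path is a list of distinct vertices with consecutive directed edges;
its edge-length is `l.length - 1`. -/
theorem tournament_card_le_of_no_long_mono_path {V : Type*} [Fintype V]
    (E : V → V → Prop) (hirr : ∀ v, ¬ E v v)
    (htour : ∀ u v : V, u ≠ v → (E u v ↔ ¬ E v u))
    (r : ℕ) (c : V → V → Fin r) (ℓ : Fin r → ℕ) (hℓ : ∀ i, 0 < ℓ i)
    (hno : ∀ i : Fin r, ¬ ∃ l : List V, l.Nodup ∧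
      l.Chain' (fun u v => E u v ∧ c u v = i) ∧ l.length = ℓ i + 1) :
    Fintype.card V ≤ ∏ i, ℓ i := by
  classical
  have key : ∀ i : Fin r, ∃ g : V → ℕ, (∀ v, g v < ℓ i) ∧
      ∀ u v, (E u v ∧ c u v = i) → u ≠ v → g u ≠ g v :=
    fun i => aux_colouring _ _ (hno i)
  choose g hg1 hg2 using key
  have hinj : Function.Injective (fun v => (fun i => (⟨g i v, hg1 i v⟩ : Fin (ℓ i)))) := by
    intro u v h
    by_contra hne
    have hdir : E u v ∨ E v u := by
      by_cases h' : E u v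
      · exact Or.inl h'
      · exact Or.inr (not_not.1 (fun hnv => h' ((htour u v hne).2 hnv)))
    rcases hdir with h' | h'
    · exact hg2 (c u v) u v ⟨h', rfl⟩ hne
        (congrArg Fin.val (congrFun h (c u v)))
    · exact hg2 (c v u) v u ⟨h', rfl⟩ (Ne.symm hne)
        (congrArg Fin.val (congrFun h (c v u))).symm
  calc Fintype.card V ≤ Fintype.card (∀ i, Fin (ℓ i)) := Fintype.card_le_of_injective _ hinj
    _ = ∏ i, ℓ i := by simp
end

section
/- For any edge-colouring c : E(K↔_n) → [r+1] of the finite complete symmetric digraph on n vertices such that there is no monochromatic directed path of edge-length ℓ_i in colour i for any i ∈ [r], the vertex set of K↔_n can be covered by ∏_{i≤r} ℓ_i pairwise vertex-disjoint monochromatic directed paths in colour r+1. -/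
section PathAux

open Relation

variable {V : Type*}

lemma reach_getLast {R : V → V → Prop} :
    ∀ (l : List V), l.Chain' R → ∀ x ∈ l, ∀ u, l.getLast? = some u →
      Relation.ReflTransGen R x u := by
  intro l
  induction l with
  | nil => intro _ x hx; simp at hx
  | cons a t ih =>
    intro hc x hx u hu
    cases t with
    | nil =>
      simp at hx hu; subst hx; subst hu; exact .refl
    | cons b t' =>
      rw [show List.Chain' R (a :: b :: t') ↔ _ from List.isChain_cons_cons] at hc
      have hu' : (b :: t').getLast? = some u := by
        simpa [List.getLast?_cons_cons] using hu
      rcases List.mem_cons.mp hx with rfl | hx'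
      · exact .head hc.1 (ih hc.2 b (List.mem_cons_self) u hu')
      · exact ih hc.2 x hx' u hu'

lemma transGen_insert_edge {R : V → V → Prop} {u v : V}
    {R' : V → V → Prop} (hR' : ∀ x y, R' x y ↔ R x y ∨ (x = u ∧ y = v)) :
    ∀ {a b}, Relation.TransGen R' a b →
      Relation.TransGen R a b ∨ (Relation.ReflTransGen R a u ∧ Relation.ReflTransGen R v b) := by
  intro a b h
  induction h with
  | single h =>
    rcases (hR' _ _).mp h with h | ⟨rfl, rfl⟩
    · exact .inl (.single h)
    · exact .inr ⟨.refl, .refl⟩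
  | tail _ h ih =>
    rcases (hR' _ _).mp h with h | ⟨rfl, rfl⟩
    · rcases ih with h' | ⟨h1, h2⟩
      · exact .inl (h'.tail h)
      · exact .inr ⟨h1, h2.tail h⟩
    · rcases ih with h' | ⟨h1, h2⟩
      · exact .inr ⟨h'.to_reflTransGen, .refl⟩
      · exact .inr ⟨h1, .refl⟩

variable [Fintype V]

def pathLens (R : V → V → Prop) (v : V) : Set ℕ :=
  {m | ∃ l : List V, l.Nodup ∧ l.Chain' R ∧ l.getLast? = some v ∧ l.length = m}

lemma one_mem_pathLens (R : V → V → Prop) (v : V) : 1 ∈ pathLens R v :=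
  ⟨[v], by simp; exact List.isChain_singleton v⟩

lemma pathLens_bdd (R : V → V → Prop) (v : V) : BddAbove (pathLens R v) :=
  ⟨Fintype.card V, fun m ⟨l, hn, _, _, hl⟩ => hl ▸ hn.length_le_card⟩

noncomputable def plen (R : V → V → Prop) (v : V) : ℕ := sSup (pathLens R v)

lemma plen_mem (R : V → V → Prop) (v : V) : plen R v ∈ pathLens R v :=
  Nat.sSup_mem ⟨1, one_mem_pathLens R v⟩ (pathLens_bdd R v)

lemma one_le_plen (R : V → V → Prop) (v : V) : 1 ≤ plen R v :=
  le_csSup (pathLens_bdd R v) (one_mem_pathLens R v)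

lemma plen_lt {R : V → V → Prop} (hA : ∀ x, ¬ Relation.TransGen R x x) {u v : V}
    (h : R u v) : plen R u < plen R v := by
  obtain ⟨l, hn, hc, hlast, hlen⟩ := plen_mem R u
  have hv : v ∉ l := fun hv =>
    hA v (Relation.TransGen.tail' (reach_getLast l hc v hv u hlast) h)
  have hmem : plen R u + 1 ∈ pathLens R v := by
    refine ⟨l ++ [v], ?_, ?_, ?_, ?_⟩
    · rw [List.nodup_append]
      exact ⟨hn, List.nodup_singleton v, fun a ha b hb hab => by subst hab; exact hv ((List.mem_singleton.mp hb) ▸ ha)⟩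
    · refine List.IsChain.append hc (by simp) ?_
      intro x hx y hy
      rw [hlast] at hx
      simp at hx hy
      subst hx; subst hy; exact h
    · simp
    · simp [hlen]
  have h2 : plen R u + 1 ≤ plen R v := le_csSup (pathLens_bdd R v) hmem
  omega

lemma plen_lt_of_transGen {R : V → V → Prop} (hA : ∀ x, ¬ Relation.TransGen R x x)
    {u v : V} (h : Relation.TransGen R u v) : plen R u < plen R v := by
  induction h with
  | single h => exact plen_lt hA h
  | tail _ h ih => exact ih.trans (plen_lt hA h)

end PathAux

/-- For any `(r+1)`-edge-colouring of the finite complete symmetric digraph on `n` vertices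
with no monochromatic directed path of edge-length `ℓ i` in colour `i` for any `i ∈ [r]`,
the vertex set can be covered by `∏ i, ℓ i` pairwise disjoint monochromatic directed paths
in colour `r+1`. -/
theorem decomposition_finite (n r : ℕ) (c : Fin n → Fin n → Fin (r + 1))
    (ℓ : Fin r → ℕ) (hℓ : ∀ i, 0 < ℓ i)
    (hno : ∀ i : Fin r,
      ¬ ∃ l : List (Fin n), IsMonoPathList c i.castSucc l ∧ l.length = ℓ i + 1) :
    ∃ P : Fin (∏ i, ℓ i) → Set (Fin n),
      (∀ k, IsMonoPathSet c (Fin.last r) (P k)) ∧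
      (Pairwise fun a b => Disjoint (P a) (P b)) ∧
      (⋃ k, P k) = Set.univ := by
  -- For each colour i, a function g with values in [1, ℓ i] separating colour-i edges
  have key : ∀ i : Fin r, ∃ g : Fin n → ℕ, (∀ v, 1 ≤ g v ∧ g v ≤ ℓ i) ∧
      ∀ u v, u ≠ v → c u v = i.castSucc → g u ≠ g v := by
    intro i
    set Ei : Finset (Fin n × Fin n) :=
      Finset.univ.filter (fun p => c p.1 p.2 = i.castSucc ∧ p.1 ≠ p.2) with hEi
    set s : Set (Finset (Fin n × Fin n)) :=
      {E | E ⊆ Ei ∧ ∀ x, ¬ Relation.TransGen (fun a b => (a, b) ∈ E) x x} with hs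
    have hfin : s.Finite := by
      apply Set.Finite.subset Ei.powerset.finite_toSet
      intro E hE
      simpa [Finset.mem_powerset] using hE.1
    have hne : s.Nonempty := by
      refine ⟨∅, by simp, fun x h => ?_⟩
      cases h with
      | single h => simp at h
      | tail _ h => simp at h
    obtain ⟨E, ⟨hEsub, hEacyc⟩, hmax⟩ :=
      Set.Finite.exists_maximalFor Finset.card s hfin hne
    set R : Fin n → Fin n → Prop := fun a b => (a, b) ∈ E with hR
    refine ⟨plen R, fun v => ⟨one_le_plen R v, ?_⟩, ?_⟩
    · -- upper bound
      refine csSup_le ⟨1, one_mem_pathLens R v⟩ ?_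
      rintro m ⟨l, hn, hc, -, rfl⟩
      by_contra hgt
      push_neg at hgt
      refine hno i ⟨l.take (ℓ i + 1), ⟨(l.take_sublist _).nodup hn, ?_⟩, ?_⟩
      · refine (hc.take _).imp (fun a b hab => ?_)
        have := hEsub hab
        rw [hEi] at this
        exact (Finset.mem_filter.mp this).2.1
      · rw [List.length_take]; omega
    · -- separation
      intro u v huv hcuv
      have huvEi : (u, v) ∈ Ei := by
        rw [hEi]; exact Finset.mem_filter.mpr ⟨Finset.mem_univ _, hcuv, huv⟩
      by_cases hmem : (u, v) ∈ E
      · exact Nat.ne_of_lt (plen_lt hEacyc hmem)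
      · -- insert (u,v) creates a cycle
        have hnotac : ¬ ∀ x, ¬ Relation.TransGen
            (fun a b => (a, b) ∈ insert (u, v) E) x x := by
          intro hac
          have hmem' : insert (u, v) E ∈ s := by
            constructor
            · exact Finset.insert_subset huvEi hEsub
            · exact hac
          have := hmax hmem' (Finset.card_le_card (Finset.subset_insert _ _))
          rw [Finset.card_insert_of_notMem hmem] at this
          omega
        push_neg at hnotac
        obtain ⟨x, hx⟩ := hnotac
        have hiff : ∀ a b : Fin n, (a, b) ∈ insert (u, v) E ↔ R a b ∨ (a = u ∧ b = v) := by
          intro a b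
          rw [Finset.mem_insert, Prod.mk.injEq]
          tauto
        rcases transGen_insert_edge hiff hx with hcyc | ⟨h1, h2⟩
        · exact absurd hcyc (hEacyc x)
        · have hvu : Relation.ReflTransGen R v u := h2.trans h1
          rcases Relation.reflTransGen_iff_eq_or_transGen.mp hvu with heq | htg
          · exact absurd heq huv
          · exact (Nat.ne_of_lt (plen_lt_of_transGen hEacyc htg)).symm
  choose g hg1 hg2 using key
  -- class function
  set F : Fin n → (∀ i : Fin r, Fin (ℓ i)) := fun v i =>
    ⟨g i v - 1, by have := hg1 i v; omega⟩ with hF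
  set P : Fin (∏ i, ℓ i) → Set (Fin n) := fun k => {v | finPiFinEquiv (F v) = k} with hP
  have hclass : ∀ {a b : Fin n} {k}, a ∈ P k → b ∈ P k → a ≠ b → c a b = Fin.last r := by
    intro a b k ha hb hab
    by_contra hne
    obtain ⟨j, hj⟩ := Fin.exists_castSucc_eq.mpr hne
    have hFa : F a = F b := finPiFinEquiv.injective (by rw [ha, hb])
    have := hg2 j a b hab hj.symm
    have h1a := hg1 j a
    have h1b := hg1 j b
    have : F a j = F b j := by rw [hFa]
    rw [hF] at this
    simp only [Fin.mk.injEq] at this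
    omega
  refine ⟨P, ?_, ?_, ?_⟩
  · intro k
    left
    set S : Finset (Fin n) := Finset.univ.filter (fun v => finPiFinEquiv (F v) = k) with hS
    have hPS : ∀ v, v ∈ P k ↔ v ∈ S := by
      intro v; rw [hP, hS]; simp
    refine ⟨S.toList, ⟨S.nodup_toList, ?_⟩, ?_⟩
    · refine List.Pairwise.isChain (S.nodup_toList.imp_of_mem ?_)
      intro a b ha hb hab
      rw [Finset.mem_toList] at ha hb
      exact hclass ((hPS a).mpr ha) ((hPS b).mpr hb) hab
    · ext v
      simp only [hP, Set.mem_setOf_eq, Finset.mem_toList, hS, Finset.mem_filter,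
        Finset.mem_univ, true_and]
  · intro a b hab
    rw [Set.disjoint_left]
    intro v hva hvb
    rw [hP, Set.mem_setOf_eq] at hva hvb
    exact hab (hva.symm.trans hvb)
  · rw [Set.eq_univ_iff_forall]
    intro v
    exact Set.mem_iUnion.mpr ⟨finPiFinEquiv (F v), rfl⟩
end

section
/- Let c : E(K↔_n) → [r+1] be an edge-colouring of the finite complete symmetric digraph on n vertices. If k is the smallest number of pairwise vertex-disjoint monochromatic directed paths in colour r+1 needed to cover the vertex set of K↔_n, then K↔_n contains as a subgraph a tournament on k vertices all of whose edges have colours in [r]. -/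
namespace GMaux
open List
set_option linter.unusedSectionVars false

variable {V : Type*} [DecidableEq V] {Adj : V → V → Prop}

/-- initial vertices of the paths -/
def heads (P : List (List V)) : List V := P.filterMap List.head?

/-- `P` is a partition of `A` into nonempty `Adj`-paths. -/
def Sys (Adj : V → V → Prop) (A : Finset V) (P : List (List V)) : Prop :=
  (∀ l ∈ P, l ≠ []) ∧ (∀ l ∈ P, l.Chain' Adj) ∧ P.flatten.Nodup ∧ ∀ x, x ∈ P.flatten ↔ x ∈ A

def Indep (Adj : V → V → Prop) (S : List V) : Prop :=
  S.Pairwise fun u v => ¬ Adj u v ∧ ¬ Adj v u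

def Orth (Adj : V → V → Prop) (P : List (List V)) : Prop :=
  ∃ pick : List V, List.Forall₂ (· ∈ ·) pick P ∧ Indep Adj pick

lemma mem_heads {x : V} {P : List (List V)} :
    x ∈ heads P ↔ ∃ l ∈ P, l.head? = some x := List.mem_filterMap

lemma heads_subset_flatten {x : V} {P : List (List V)} (h : x ∈ heads P) : x ∈ P.flatten := by
  obtain ⟨l, hl, hx⟩ := mem_heads.mp h
  exact mem_flatten.mpr ⟨l, hl, by cases l <;> simp_all⟩

lemma forall₂_heads : ∀ {P : List (List V)}, (∀ l ∈ P, l ≠ []) →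
    List.Forall₂ (· ∈ ·) (heads P) P := by
  intro P
  induction P with
  | nil => intro _; simp [heads]
  | cons l P ih =>
    intro h
    cases l with
    | nil => exact absurd rfl (h [] (mem_cons_self))
    | cons x t =>
      have : heads ((x :: t) :: P) = x :: heads P := by simp [heads]
      rw [this]
      exact List.Forall₂.cons (mem_cons_self) (ih fun l hl => h l (mem_cons_of_mem _ hl))

lemma heads_length : ∀ {P : List (List V)}, (∀ l ∈ P, l ≠ []) →
    (heads P).length = P.length := by
  intro P
  induction P with
  | nil => intro _; rfl
  | cons l P ih =>
    intro h
    cases l with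
    | nil => exact absurd rfl (h [] (mem_cons_self))
    | cons x t =>
      have : heads ((x :: t) :: P) = x :: heads P := by simp [heads]
      rw [this]
      simp [ih fun l hl => h l (mem_cons_of_mem _ hl)]

lemma Sys.perm {A : Finset V} {P P' : List (List V)} (h : Sys Adj A P) (hp : P ~ P') :
    Sys Adj A P' := by
  obtain ⟨h1, h2, h3, h4⟩ := h
  exact ⟨fun l hl => h1 l (hp.symm.subset hl), fun l hl => h2 l (hp.symm.subset hl),
    hp.flatten.nodup_iff.mp h3, fun x => (hp.flatten.mem_iff).symm.trans (h4 x)⟩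

lemma heads_nodup : ∀ {P : List (List V)}, P.flatten.Nodup → (heads P).Nodup := by
  intro P
  induction P with
  | nil => intro _; simp [heads]
  | cons l P ih =>
    intro h
    rw [flatten_cons, nodup_append] at h
    cases l with
    | nil => exact ih h.2.1
    | cons x t =>
      have : heads ((x :: t) :: P) = x :: heads P := by simp [heads]
      rw [this, nodup_cons]
      refine ⟨fun hx => ?_, ih h.2.1⟩
      exact h.2.2 x mem_cons_self x (heads_subset_flatten hx) rfl

lemma pair_filterMap {f : List V → Option V} : ∀ {P : List (List V)} {a b : V},
    [a, b] <+ P.filterMap f → ∃ X Y, [X, Y] <+ P ∧ f X = some a ∧ f Y = some b := by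
  intro P
  induction P with
  | nil => intro a b h; simp at h
  | cons c P ih =>
    intro a b h
    rw [filterMap_cons] at h
    cases hc : f c with
    | none =>
      rw [hc] at h
      obtain ⟨X, Y, hXY, hX, hY⟩ := ih h
      exact ⟨X, Y, hXY.cons c, hX, hY⟩
    | some u =>
      rw [hc] at h
      rcases (List.sublist_cons_iff).mp h with h' | ⟨r, hr, hr'⟩
      · obtain ⟨X, Y, hXY, hX, hY⟩ := ih h'
        exact ⟨X, Y, hXY.cons c, hX, hY⟩
      · -- [a,b] = u :: r, r <+ filterMap f P
        have ha : a = u := by injection hr with h1 h2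
        have hb : b ∈ P.filterMap f := by
          have : r = [b] := by injection hr with h1 h2; exact h2.symm
          subst this
          exact (List.singleton_sublist).mp hr'
        obtain ⟨Y, hY, hYf⟩ := List.mem_filterMap.mp hb
        exact ⟨c, Y, (List.cons_sublist_cons).mpr ((List.singleton_sublist).mpr hY),
          ha ▸ hc, hYf⟩

lemma perm_pair : ∀ {P : List (List V)} {X Y : List V},
    [X, Y] <+ P → ∃ R, P ~ X :: Y :: R := by
  intro P
  induction P with
  | nil => intro X Y h; simp at h
  | cons c P ih =>
    intro X Y h
    rcases (List.sublist_cons_iff).mp h with h' | ⟨r, hr, hr'⟩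
    · obtain ⟨R, hR⟩ := ih h'
      refine ⟨c :: R, (hR.cons c).trans ?_⟩
      calc c :: X :: Y :: R ~ X :: c :: Y :: R := Perm.swap _ _ _
        _ ~ X :: Y :: c :: R := Perm.cons _ (Perm.swap _ _ _)
    · have hX : X = c := by injection hr
      have hY : Y ∈ P := by
        have : r = [Y] := by injection hr with h1 h2; exact h2.symm
        subst this
        exact (List.singleton_sublist).mp hr'
      obtain ⟨R', hR'⟩ : ∃ R', P ~ Y :: R' := ⟨_, List.perm_cons_erase hY⟩
      exact ⟨R', by rw [hX]; exact Perm.cons c hR'⟩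

lemma forall₂_perm : ∀ {P P' : List (List V)}, P ~ P' → ∀ {pick : List V},
    List.Forall₂ (· ∈ ·) pick P →
    ∃ pick', pick' ~ pick ∧ List.Forall₂ (· ∈ ·) pick' P' := by
  intro P P' hp
  induction hp with
  | nil => intro pick h; exact ⟨pick, Perm.refl _, h⟩
  | cons x _ ih =>
    intro pick h
    obtain ⟨v, p, hv, hp2, rfl⟩ := List.forall₂_cons_right_iff.mp h
    obtain ⟨p', hpp, hf⟩ := ih hp2
    exact ⟨v :: p', hpp.cons v, hf.cons hv⟩
  | swap x y l =>
    intro pick h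
    obtain ⟨v, p, hv, hp2, rfl⟩ := List.forall₂_cons_right_iff.mp h
    obtain ⟨w, q, hw, hq2, rfl⟩ := List.forall₂_cons_right_iff.mp hp2
    exact ⟨w :: v :: q, Perm.swap _ _ _, List.Forall₂.cons hw (List.Forall₂.cons hv hq2)⟩
  | trans _ _ ih1 ih2 =>
    intro pick h
    obtain ⟨p1, hp1, hf1⟩ := ih1 h
    obtain ⟨p2, hp2, hf2⟩ := ih2 hf1
    exact ⟨p2, hp2.trans hp1, hf2⟩

lemma mem_flatten_of_forall₂ : ∀ {pick : List V} {P : List (List V)},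
    List.Forall₂ (· ∈ ·) pick P → ∀ v ∈ pick, v ∈ P.flatten := by
  intro pick P h
  induction h with
  | nil => simp
  | cons hv _ ih =>
    intro w hw
    rcases List.mem_cons.mp hw with rfl | hw
    · exact mem_flatten.mpr ⟨_, mem_cons_self, hv⟩
    · rw [flatten_cons, mem_append]; exact Or.inr (ih w hw)

lemma nodup_pick : ∀ {pick : List V} {P : List (List V)},
    List.Forall₂ (· ∈ ·) pick P → P.flatten.Nodup → pick.Nodup := by
  intro pick P h
  induction h with
  | nil => intro _; simp
  | @cons v l p L hv hf ih =>
    intro hn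
    rw [flatten_cons, nodup_append] at hn
    rw [nodup_cons]
    exact ⟨fun hvp => hn.2.2 v hv v (mem_flatten_of_forall₂ hf v hvp) rfl, ih hn.2.1⟩


lemma merge {A : Finset V} {a z : V} {Q E : List (List V)} {Z : List V}
    (hQ : Sys Adj (A.erase a) Q) (hperm : Q ~ Z :: E) (hz : Z.head? = some z)
    (hadj : Adj a z) (haA : a ∈ A) :
    Sys Adj A ((a :: Z) :: E) ∧ ((a :: Z) :: E).length = Q.length ∧
      ∀ x ∈ heads ((a :: Z) :: E), x = a ∨ (x ∈ heads Q ∧ x ≠ z) := by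
  have hQ2 : Sys Adj (A.erase a) (Z :: E) := hQ.perm hperm
  obtain ⟨Z', rfl⟩ : ∃ Z', Z = z :: Z' := by
    cases Z with
    | nil => simp at hz
    | cons h t =>
      simp only [head?_cons, Option.some.injEq] at hz
      exact ⟨t, by rw [hz]⟩
  have hna : a ∉ ((z :: Z') :: E).flatten := by
    intro h
    have := (hQ2.2.2.2 a).mp h
    simp at this
  have hflat : ((a :: z :: Z') :: E).flatten = a :: ((z :: Z') :: E).flatten := by simp
  refine ⟨⟨?_, ?_, ?_, ?_⟩, ?_, ?_⟩
  · intro l hl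
    rcases mem_cons.mp hl with rfl | hl
    · simp
    · exact hQ2.1 l (mem_cons_of_mem _ hl)
  · intro l hl
    rcases mem_cons.mp hl with rfl | hl
    · exact isChain_cons_cons.mpr ⟨hadj, hQ2.2.1 _ (mem_cons_self)⟩
    · exact hQ2.2.1 l (mem_cons_of_mem _ hl)
  · rw [hflat, nodup_cons]
    exact ⟨hna, hQ2.2.2.1⟩
  · intro x
    rw [hflat, mem_cons]
    constructor
    · rintro (rfl | hx)
      · exact haA
      · exact Finset.mem_of_mem_erase ((hQ2.2.2.2 x).mp hx)
    · intro hx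
      by_cases hxa : x = a
      · exact Or.inl hxa
      · exact Or.inr ((hQ2.2.2.2 x).mpr (Finset.mem_erase.mpr ⟨hxa, hx⟩))
  · simpa using hperm.length_eq.symm
  · intro x hx
    have hhe : heads ((a :: z :: Z') :: E) = a :: heads E := by simp [heads]
    rw [hhe, mem_cons] at hx
    rcases hx with rfl | hx
    · exact Or.inl rfl
    · refine Or.inr ⟨?_, ?_⟩
      · obtain ⟨l, hl, hlh⟩ := mem_heads.mp hx
        exact mem_heads.mpr ⟨l, hperm.symm.subset (mem_cons_of_mem _ hl), hlh⟩
      · intro hxz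
        have hndZE : (heads ((z :: Z') :: E)).Nodup := heads_nodup hQ2.2.2.1
        have : heads ((z :: Z') :: E) = z :: heads E := by simp [heads]
        rw [this, nodup_cons] at hndZE
        exact hndZE.1 (hxz ▸ hx)

lemma gm : ∀ (N : ℕ) (A : Finset V), A.card ≤ N → ∀ P, Sys Adj A P →
    Orth Adj P ∨ ∃ Q, Sys Adj A Q ∧ Q.length < P.length ∧ ∀ x ∈ heads Q, x ∈ heads P := by
  intro N
  induction N with
  | zero =>
    intro A hA P hP
    left
    have hPnil : P = [] := by
      cases P with
      | nil => rfl
      | cons l P =>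
        exfalso
        have hl := hP.1 l (mem_cons_self)
        obtain ⟨x, hx⟩ := List.exists_mem_of_ne_nil l hl
        have hxA : x ∈ A := (hP.2.2.2 x).mp (mem_flatten.mpr ⟨l, mem_cons_self, hx⟩)
        have hA0 : A = ∅ := Finset.card_eq_zero.mp (Nat.le_zero.mp hA)
        simp [hA0] at hxA
    subst hPnil
    exact ⟨[], List.Forall₂.nil, List.Pairwise.nil⟩
  | succ N ih =>
    intro A hA P hP
    by_cases hind : Indep Adj (heads P)
    · exact Or.inl ⟨heads P, forall₂_heads hP.1, hind⟩
    · have hex : ∃ u v, [u, v] <+ heads P ∧ (Adj u v ∨ Adj v u) := by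
        by_contra hcon
        push_neg at hcon
        exact hind (List.pairwise_iff_forall_sublist.mpr fun {u v} hs => hcon u v hs)
      obtain ⟨u, v, hsub, hor⟩ := hex
      obtain ⟨X0, Y0, hXY0, hX0, hY0⟩ := pair_filterMap hsub
      obtain ⟨R0, hPerm0⟩ := perm_pair hXY0
      have key : ∃ (X Y : List V) (R : List (List V)) (a b : V), P ~ X :: Y :: R ∧ X.head? = some a ∧
          Y.head? = some b ∧ Adj a b := by
        rcases hor with h | h
        · exact ⟨X0, Y0, R0, u, v, hPerm0, hX0, hY0, h⟩
        · exact ⟨Y0, X0, R0, v, u, hPerm0.trans (Perm.swap _ _ _), hY0, hX0, h⟩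
      obtain ⟨X, Y, R, a, b, hPerm, hXa, hYb, hab⟩ := key
      have hP2 : Sys Adj A (X :: Y :: R) := hP.perm hPerm
      have haP : a ∈ heads P := mem_heads.mpr ⟨X, hPerm.symm.subset (by simp), hXa⟩
      have hbP : b ∈ heads P := mem_heads.mpr ⟨Y, hPerm.symm.subset (by simp), hYb⟩
      have hRP : ∀ x ∈ heads R, x ∈ heads P := by
        intro x hx
        obtain ⟨l, hl, hxl⟩ := mem_heads.mp hx
        exact mem_heads.mpr ⟨l, hPerm.symm.subset (by simp [hl]), hxl⟩
      have hlenP : P.length = R.length + 2 := by simpa using hPerm.length_eq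
      obtain ⟨X', rfl⟩ : ∃ X', X = a :: X' := by
        cases X with
        | nil => simp at hXa
        | cons h t =>
          simp only [head?_cons, Option.some.injEq] at hXa
          exact ⟨t, by rw [hXa]⟩
      obtain ⟨Y', rfl⟩ : ∃ Y', Y = b :: Y' := by
        cases Y with
        | nil => simp at hYb
        | cons h t =>
          simp only [head?_cons, Option.some.injEq] at hYb
          exact ⟨t, by rw [hYb]⟩
      cases X' with
      | nil =>
        right
        obtain ⟨h1, h2, h3, h4⟩ := hP2
        refine ⟨(a :: b :: Y') :: R, ⟨?_, ?_, ?_, ?_⟩, ?_, ?_⟩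
        · intro l hl
          rcases mem_cons.mp hl with rfl | hl
          · simp
          · exact h1 l (by simp [hl])
        · intro l hl
          rcases mem_cons.mp hl with rfl | hl
          · exact isChain_cons_cons.mpr ⟨hab, h2 (b :: Y') (by simp)⟩
          · exact h2 l (by simp [hl])
        · simpa using h3
        · intro x
          have := h4 x
          simpa using this
        · simp [hlenP]
        · intro x hx
          have hhe : heads ((a :: b :: Y') :: R) = a :: heads R := by simp [heads]
          rw [hhe, mem_cons] at hx
          rcases hx with rfl | hx
          · exact haP
          · exact hRP x hx
      | cons a' X'' =>
        have haA : a ∈ A := (hP2.2.2.2 a).mp (by simp)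
        have ha'adj : Adj a a' :=
          (isChain_cons_cons.mp (hP2.2.1 (a :: a' :: X'') (mem_cons_self))).1
        have hnaflat : a ∉ ((a' :: X'') :: (b :: Y') :: R).flatten := by
          have h3 := hP2.2.2.1
          have : ((a :: a' :: X'') :: (b :: Y') :: R).flatten
              = a :: ((a' :: X'') :: (b :: Y') :: R).flatten := by simp
          rw [this, nodup_cons] at h3
          exact h3.1
        have hSys' : Sys Adj (A.erase a) ((a' :: X'') :: (b :: Y') :: R) := by
          refine ⟨?_, ?_, ?_, ?_⟩
          · intro l hl
            rcases mem_cons.mp hl with rfl | hl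
            · simp
            · exact hP2.1 l (by simp [hl])
          · intro l hl
            rcases mem_cons.mp hl with rfl | hl
            · exact (isChain_cons_cons.mp (hP2.2.1 (a :: a' :: X'') (mem_cons_self))).2
            · exact hP2.2.1 l (by simp [hl])
          · have h3 := hP2.2.2.1
            have : ((a :: a' :: X'') :: (b :: Y') :: R).flatten
                = a :: ((a' :: X'') :: (b :: Y') :: R).flatten := by simp
            rw [this, nodup_cons] at h3
            exact h3.2
          · intro x
            have hflat2 : ((a :: a' :: X'') :: (b :: Y') :: R).flatten
                = a :: ((a' :: X'') :: (b :: Y') :: R).flatten := by simp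
            constructor
            · intro hx
              refine Finset.mem_erase.mpr ⟨?_, ?_⟩
              · rintro rfl; exact hnaflat hx
              · refine (hP2.2.2.2 x).mp ?_
                rw [hflat2]
                exact mem_cons_of_mem a hx
            · intro hx
              obtain ⟨hxa, hxA⟩ := Finset.mem_erase.mp hx
              have hx2 := (hP2.2.2.2 x).mpr hxA
              rw [hflat2, mem_cons] at hx2
              rcases hx2 with rfl | hx2
              · exact absurd rfl hxa
              · exact hx2
        have hcard' : (A.erase a).card ≤ N := by
          rw [Finset.card_erase_of_mem haA]
          omega
        rcases ih (A.erase a) hcard' _ hSys' with hOrth | ⟨Q', hQ', hlen', hheads'⟩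
        · left
          obtain ⟨pick, hf, hi⟩ := hOrth
          obtain ⟨v0, p0, hv0, hp0, rfl⟩ := List.forall₂_cons_right_iff.mp hf
          have hf2 : List.Forall₂ (· ∈ ·) (v0 :: p0)
              ((a :: a' :: X'') :: (b :: Y') :: R) :=
            List.Forall₂.cons (mem_cons_of_mem a hv0) hp0
          obtain ⟨pick', hpp, hf'⟩ := forall₂_perm hPerm.symm hf2
          refine ⟨pick', hf', ?_⟩
          exact (hpp.pairwise_iff (fun h => ⟨h.2, h.1⟩)).mpr hi
        · have hheadsP' : heads ((a' :: X'') :: (b :: Y') :: R) = a' :: b :: heads R := by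
            simp [heads]
          have hlen'' : Q'.length < R.length + 2 := by simp at hlen'; omega
          by_cases hZa' : ∃ Z ∈ Q', Z.head? = some a'
          · obtain ⟨Z, hZQ, hZh⟩ := hZa'
            obtain ⟨E, hpermQ⟩ : ∃ E, Q' ~ Z :: E := ⟨_, List.perm_cons_erase hZQ⟩
            obtain ⟨hSysQ, hlenQ, hheadsQ⟩ := merge hQ' hpermQ hZh ha'adj haA
            right
            refine ⟨(a :: Z) :: E, hSysQ, ?_, ?_⟩
            · rw [hlenQ, hlenP]; exact hlen''
            · intro x hx
              rcases hheadsQ x hx with rfl | ⟨hxQ, hxz⟩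
              · exact haP
              · have hxh := hheads' x hxQ
                rw [hheadsP', mem_cons, mem_cons] at hxh
                rcases hxh with rfl | rfl | hxh
                · exact absurd rfl hxz
                · exact hbP
                · exact hRP x hxh
          · by_cases hZadj : ∃ Z ∈ Q', ∃ z, Z.head? = some z ∧ Adj a z
            · obtain ⟨Z, hZQ, z, hZh, hza⟩ := hZadj
              obtain ⟨E, hpermQ⟩ : ∃ E, Q' ~ Z :: E := ⟨_, List.perm_cons_erase hZQ⟩
              obtain ⟨hSysQ, hlenQ, hheadsQ⟩ := merge hQ' hpermQ hZh hza haA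
              right
              refine ⟨(a :: Z) :: E, hSysQ, ?_, ?_⟩
              · rw [hlenQ, hlenP]; exact hlen''
              · intro x hx
                rcases hheadsQ x hx with rfl | ⟨hxQ, hxz⟩
                · exact haP
                · have hxh := hheads' x hxQ
                  rw [hheadsP', mem_cons, mem_cons] at hxh
                  rcases hxh with rfl | rfl | hxh
                  · exfalso
                    obtain ⟨l, hl, hlh⟩ := mem_heads.mp hxQ
                    exact hZa' ⟨l, hl, hlh⟩
                  · exact hbP
                  · exact hRP x hxh
            · have hbQ : b ∉ heads Q' := by
                intro hb
                obtain ⟨l, hl, hlh⟩ := mem_heads.mp hb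
                exact hZadj ⟨l, hl, b, hlh, hab⟩
              have ha'Q : a' ∉ heads Q' := by
                intro h
                obtain ⟨l, hl, hlh⟩ := mem_heads.mp h
                exact hZa' ⟨l, hl, hlh⟩
              have hsubR : ∀ x ∈ heads Q', x ∈ heads R := by
                intro x hx
                have hxh := hheads' x hx
                rw [hheadsP', mem_cons, mem_cons] at hxh
                rcases hxh with rfl | rfl | hxh
                · exact absurd hx ha'Q
                · exact absurd hx hbQ
                · exact hxh
              have hnd := heads_nodup hQ'.2.2.1
              have hlQ : Q'.length ≤ R.length := by
                have h1 := (hnd.subperm hsubR).length_le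
                rw [heads_length hQ'.1] at h1
                exact h1.trans (List.length_filterMap_le _ _)
              right
              have hnaQ : a ∉ Q'.flatten := by
                intro h
                have := (hQ'.2.2.2 a).mp h
                simp at this
              refine ⟨[a] :: Q', ⟨?_, ?_, ?_, ?_⟩, ?_, ?_⟩
              · intro l hl
                rcases mem_cons.mp hl with rfl | hl
                · simp
                · exact hQ'.1 l hl
              · intro l hl
                rcases mem_cons.mp hl with rfl | hl
                · exact isChain_singleton a
                · exact hQ'.2.1 l hl
              · have : ([a] :: Q').flatten = a :: Q'.flatten := by simp
                rw [this, nodup_cons]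
                exact ⟨hnaQ, hQ'.2.2.1⟩
              · intro x
                have : ([a] :: Q').flatten = a :: Q'.flatten := by simp
                rw [this, mem_cons]
                constructor
                · rintro (rfl | hx)
                  · exact haA
                  · exact Finset.mem_of_mem_erase ((hQ'.2.2.2 x).mp hx)
                · intro hx
                  by_cases hxa : x = a
                  · exact Or.inl hxa
                  · exact Or.inr ((hQ'.2.2.2 x).mpr (Finset.mem_erase.mpr ⟨hxa, hx⟩))
              · simp only [length_cons, hlenP]
                omega
              · intro x hx
                have hhe : heads ([a] :: Q') = a :: heads Q' := by simp [heads]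
                rw [hhe, mem_cons] at hx
                rcases hx with rfl | hx
                · exact haP
                · exact hRP x (hsubR x hx)

lemma exists_orth : ∀ (N : ℕ) (A : Finset V) (P : List (List V)), P.length ≤ N →
    Sys Adj A P → ∃ Q, Sys Adj A Q ∧ Orth Adj Q := by
  intro N
  induction N with
  | zero =>
    intro A P hlen hP
    rcases gm A.card A le_rfl P hP with h | ⟨Q, _, hQl, _⟩
    · exact ⟨P, hP, h⟩
    · omega
  | succ N ih =>
    intro A P hlen hP
    rcases gm A.card A le_rfl P hP with h | ⟨Q, hQ, hQl, _⟩
    · exact ⟨P, hP, h⟩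
    · exact ih A Q (by omega) hQ


lemma flatten_map_singleton {α : Type*} : ∀ (l : List α), (l.map fun v => [v]).flatten = l
  | [] => rfl
  | a :: l => by simp [flatten_map_singleton l]

end GMaux

/-- Let `c` be an `(r+1)`-edge-colouring of the finite complete symmetric digraph on `n`
vertices. If `k` is the smallest number of pairwise disjoint monochromatic directed paths in
colour `r+1` needed to cover the vertex set, then the digraph contains a tournament on `k`
vertices all of whose edges have colours in `[r]` (i.e. colour `≠ r+1`) as a subgraph. -/
theorem subtournament_of_min_cover (n r k : ℕ) (c : Fin n → Fin n → Fin (r + 1))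
    (hk : IsLeast {m : ℕ | ∃ P : Fin m → Set (Fin n),
      (∀ j, IsMonoPathSet c (Fin.last r) (P j)) ∧
      (Pairwise fun a b => Disjoint (P a) (P b)) ∧
      (⋃ j, P j) = Set.univ} k) :
    ∃ S : Finset (Fin n), S.card = k ∧ ∃ E : Fin n → Fin n → Prop,
      (∀ u v, E u v → u ∈ S ∧ v ∈ S ∧ c u v ≠ Fin.last r) ∧
      (∀ v, ¬ E v v) ∧
      (∀ u ∈ S, ∀ v ∈ S, u ≠ v → (E u v ↔ ¬ E v u)) := by
  classical
  open List GMaux in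
  have hflat0 : (((Finset.univ : Finset (Fin n)).toList.map fun v => [v]).flatten)
      = (Finset.univ : Finset (Fin n)).toList := GMaux.flatten_map_singleton _
  have hSys0 : GMaux.Sys (fun u v => c u v = Fin.last r) Finset.univ
      ((Finset.univ : Finset (Fin n)).toList.map fun v => [v]) := by
    refine ⟨?_, ?_, ?_, ?_⟩
    · intro l hl; obtain ⟨v, _, rfl⟩ := List.mem_map.mp hl; simp
    · intro l hl; obtain ⟨v, _, rfl⟩ := List.mem_map.mp hl; exact List.isChain_singleton v
    · rw [hflat0]; exact Finset.univ.nodup_toList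
    · intro x; rw [hflat0]; simp [Finset.mem_toList]
  obtain ⟨Q, hQ, pick, hfa, hind⟩ := GMaux.exists_orth _ Finset.univ _ le_rfl hSys0
  have hmem : Q.length ∈ {m : ℕ | ∃ P : Fin m → Set (Fin n),
      (∀ j, IsMonoPathSet c (Fin.last r) (P j)) ∧
      (Pairwise fun a b => Disjoint (P a) (P b)) ∧
      (⋃ j, P j) = Set.univ} := by
    refine ⟨fun j => {x | x ∈ Q.get j}, ?_, ?_, ?_⟩
    · intro j
      left
      have hmemj : Q.get j ∈ Q := List.get_mem Q j
      exact ⟨Q.get j, ⟨(List.nodup_flatten.mp hQ.2.2.1).1 _ hmemj,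
        hQ.2.1 _ hmemj⟩, rfl⟩
    · intro i j hij
      have hpw := (List.nodup_flatten.mp hQ.2.2.1).2
      rw [List.pairwise_iff_get] at hpw
      rcases lt_or_gt_of_ne hij with h | h
      · exact Set.disjoint_left.mpr fun {x} hx1 hx2 => (hpw i j h) hx1 hx2
      · exact Set.disjoint_right.mpr fun {x} hx2 hx1 => (hpw j i h) hx2 hx1
    · ext x
      simp only [Set.mem_iUnion, Set.mem_univ, iff_true]
      have hx : x ∈ Q.flatten := (hQ.2.2.2 x).mpr (Finset.mem_univ x)
      obtain ⟨l, hl, hxl⟩ := List.mem_flatten.mp hx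
      obtain ⟨i, rfl⟩ := List.mem_iff_get.mp hl
      exact ⟨i, hxl⟩
  have hkQ : k ≤ Q.length := hk.2 hmem
  have hnd : pick.Nodup := GMaux.nodup_pick hfa hQ.2.2.1
  have hcardT : pick.toFinset.card = Q.length := by
    rw [List.toFinset_card_of_nodup hnd, hfa.length_eq]
  obtain ⟨S, hSsub, hScard⟩ := Finset.exists_subset_card_eq (hcardT ▸ hkQ :
    k ≤ pick.toFinset.card)
  have hindep : ∀ u ∈ S, ∀ v ∈ S, u ≠ v → ¬ c u v = Fin.last r ∧ ¬ c v u = Fin.last r := by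
    intro u hu v hv hne
    haveI : Std.Symm (fun u v => ¬ c u v = Fin.last r ∧ ¬ c v u = Fin.last r) := ⟨fun x y h' => ⟨h'.2, h'.1⟩⟩
    exact (List.Pairwise.forall (R := fun u v => ¬ c u v = Fin.last r ∧ ¬ c v u = Fin.last r) hind)
      (List.mem_toFinset.mp (hSsub hu)) (List.mem_toFinset.mp (hSsub hv)) hne
  refine ⟨S, hScard, fun u v => u ∈ S ∧ v ∈ S ∧ u < v, ?_, ?_, ?_⟩
  · rintro u v ⟨hu, hv, huv⟩
    exact ⟨hu, hv, (hindep u hu v hv (ne_of_lt huv)).1⟩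
  · rintro v ⟨_, _, hvv⟩
    exact lt_irrefl v hvv
  · intro u hu v hv hne
    constructor
    · rintro ⟨_, _, huv⟩ ⟨_, _, hvu⟩
      exact absurd hvu (lt_asymm huv)
    · intro h
      rcases hne.lt_or_gt with hlt | hlt
      · exact ⟨hu, hv, hlt⟩
      · exact absurd ⟨hv, hu, hlt⟩ h
end

section
/- Every countable strongly <ℵ₀-connected digraph can be covered by a single one-way infinite directed path, i.e. there is a directed path (finite, or one-way infinite) whose vertex set is the whole vertex set of the digraph. -/
/-- A digraph `(V, E)` is strongly `<ℵ₀`-connected if for every two distinct vertices `v`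
and `w` there are infinitely many pairwise internally vertex-disjoint directed paths from
`v` to `w` (and hence, by symmetry of the quantifier, also from `w` to `v`). Here a
directed path from `v` to `w` is a list of distinct vertices starting at `v`, ending at
`w`, with consecutive directed edges; the family `P` consists of pairwise distinct paths
any two of which meet only in `v` and `w`. -/
def StronglyCofinConnected {V : Type*} (E : V → V → Prop) : Prop :=
  ∀ v w : V, v ≠ w → ∃ P : ℕ → List V,
    (∀ n, (P n).Nodup ∧ (P n).Chain' E ∧ (P n).head? = some v ∧ (P n).getLast? = some w) ∧
    (∀ m n, m ≠ n → P m ≠ P n ∧ ∀ x, x ∈ P m → x ∈ P n → x = v ∨ x = w)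

/-- Extension lemma: a finite directed path can be extended (keeping it as a prefix)
to include any new vertex. -/
lemma StronglyCofinConnected.extend {V : Type*} {E : V → V → Prop}
    (h : StronglyCofinConnected E) (L : List V) (hne : L ≠ [])
    (hnd : L.Nodup) (hch : L.Chain' E) (w : V) (hw : w ∉ L) :
    ∃ L', L <+: L' ∧ L'.Nodup ∧ L'.Chain' E ∧ w ∈ L' := by
  set a := L.getLast hne with ha
  have haL : a ∈ L := List.getLast_mem hne
  have haw : a ≠ w := fun e => hw (e ▸ haL)
  obtain ⟨P, hP, hdisj⟩ := h a w haw
  -- find a path whose interior avoids L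
  set B : Set ℕ := {n | ∃ x, x ∈ P n ∧ x ∈ L ∧ x ≠ a} with hB
  have hBfin : B.Finite := by
    have : ∀ n ∈ B, ∃ x, x ∈ P n ∧ x ∈ L ∧ x ≠ a := fun n hn => hn
    choose g hg1 hg2 hg3 using this
    have hinj : Set.InjOn (fun n : B => g n n.2) Set.univ := by
      intro ⟨m, hm⟩ _ ⟨n, hn⟩ _ hmn
      simp only at hmn
      by_contra hne'
      have hmn' : m ≠ n := fun e => hne' (by simp [e])
      rcases (hdisj m n hmn').2 _ (hg1 m hm) (hmn ▸ hg1 n hn) with h1 | h1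
      · exact hg3 m hm h1
      · exact hw (h1 ▸ hg2 m hm)
    have : Set.Finite (Set.univ : Set B) := by
      apply Set.Finite.of_finite_image _ hinj
      apply Set.Finite.subset (List.finite_toSet L)
      rintro x ⟨⟨n, hn⟩, -, rfl⟩
      exact hg2 n hn
    have : Finite B := Set.finite_univ_iff.mp this
    exact Set.toFinite B
  obtain ⟨n, hn⟩ := hBfin.infinite_compl.nonempty
  have hgood : ∀ x, x ∈ P n → x ∈ L → x = a := by
    intro x hx hxL
    by_contra hxa
    exact hn ⟨x, hx, hxL, hxa⟩
  obtain ⟨hpnd, hpch, hphead, hplast⟩ := hP n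
  have hpne : P n ≠ [] := fun e => by simp [e] at hphead
  have hcons : a :: (P n).tail = P n := List.cons_head?_tail hphead
  set t := (P n).tail with ht
  have htne : t ≠ [] := by
    intro e
    rw [e] at hcons
    rw [← hcons] at hplast
    simp at hplast
    exact haw hplast
  have hwt : w ∈ t := by
    have hwp : w ∈ P n := by
      have := List.getLast?_eq_getLast hpne
      rw [this] at hplast
      have : (P n).getLast hpne = w := by injection hplast
      exact this ▸ List.getLast_mem hpne
    rw [← hcons] at hwp
    rcases List.mem_cons.mp hwp with h1 | h1
    · exact absurd h1.symm haw
    · exact h1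
  have htnd : t.Nodup ∧ a ∉ t := by
    have := hcons ▸ hpnd
    rw [List.nodup_cons] at this
    exact ⟨this.2, this.1⟩
  refine ⟨L ++ t, List.prefix_append _ _, ?_, ?_, by simp [hwt]⟩
  · rw [List.nodup_append]
    refine ⟨hnd, htnd.1, ?_⟩
    rintro x hxL _ hxt rfl
    have hxp : x ∈ P n := by rw [← hcons]; exact List.mem_cons_of_mem _ hxt
    exact htnd.2 ((hgood x hxp hxL) ▸ hxt)
  · refine List.IsChain.append hch ?_ ?_
    · have := hcons ▸ hpch
      exact (List.isChain_cons.mp this).2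
    · intro x hx y hy
      rw [List.getLast?_eq_getLast hne] at hx
      have hxa : x = a := by have := hx; simp [← ha] at this; exact this.symm
      have := hcons ▸ hpch
      have := (List.isChain_cons.mp this).1 y hy
      rwa [hxa]


/-- Every countable non-trivial strongly `<ℵ₀`-connected digraph can be covered by a single
one-way infinite directed path: there is a directed path (finite, or one-way infinite)
whose vertex set is the whole vertex set. -/
theorem covered_by_single_path_of_stronglyCofinConnected {V : Type*} [Countable V]
    [Nontrivial V] (E : V → V → Prop) (h : StronglyCofinConnected E) :
    (∃ l : List V, l.Nodup ∧ l.Chain' E ∧ {x | x ∈ l} = Set.univ) ∨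
    (∃ f : ℕ → V, Function.Injective f ∧ (∀ n, E (f n) (f (n + 1))) ∧
      Set.range f = Set.univ) := by
  obtain ⟨e, he⟩ := exists_surjective_nat V
  -- step function: extend a path to contain w (trivially if already there)
  have step : ∀ L : List V, L ≠ [] → L.Nodup → L.Chain' E → ∀ w : V,
      ∃ L', L <+: L' ∧ L' ≠ [] ∧ L'.Nodup ∧ L'.Chain' E ∧ w ∈ L' := by
    intro L h1 h2 h3 w
    by_cases hw : w ∈ L
    · exact ⟨L, List.prefix_refl _, h1, h2, h3, hw⟩
    · obtain ⟨L', hp, hn, hc, hm⟩ := h.extend L h1 h2 h3 w hw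
      refine ⟨L', hp, ?_, hn, hc, hm⟩
      intro e'; rw [e'] at hm; exact absurd hm (List.not_mem_nil)
  choose step' hpre hne' hnd' hch' hmem using step
  -- the increasing sequence of paths
  let T := {l : List V // l ≠ [] ∧ l.Nodup ∧ l.Chain' E}
  let F : ℕ → T := fun n => Nat.rec (motive := fun _ => T)
    ⟨[e 0], by simp, List.nodup_singleton _, List.isChain_singleton _⟩
    (fun n prev => ⟨step' prev.1 prev.2.1 prev.2.2.1 prev.2.2.2 (e n),
      hne' _ _ _ _ _, hnd' _ _ _ _ _, hch' _ _ _ _ _⟩) n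
  set L : ℕ → List V := fun n => (F n).1 with hL
  have hLnd : ∀ n, (L n).Nodup := fun n => (F n).2.2.1
  have hLch : ∀ n, (L n).Chain' E := fun n => (F n).2.2.2
  have hLpre : ∀ n, L n <+: L (n + 1) := fun n => hpre _ _ _ _ (e n)
  have hLmem : ∀ n, e n ∈ L (n + 1) := fun n => hmem _ _ _ _ (e n)
  have hLmono : ∀ m n, m ≤ n → L m <+: L n := by
    intro m n hmn
    induction n, hmn using Nat.le_induction with
    | base => exact List.prefix_refl _
    | succ n hmn ih => exact ih.trans (hLpre n)
  have hcover : ∀ v : V, ∃ n, v ∈ L n := by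
    intro v
    obtain ⟨n, rfl⟩ := he v
    exact ⟨n + 1, hLmem n⟩
  cases finite_or_infinite V with
  | inl hfin =>
    left
    have := Fintype.ofFinite V
    choose nv hnv using hcover
    set N := Finset.univ.sup nv with hN
    refine ⟨L N, hLnd N, hLch N, Set.eq_univ_iff_forall.mpr fun v => ?_⟩
    exact (hLmono (nv v) N (Finset.le_sup (Finset.mem_univ v))).subset (hnv v)
  | inr hinf =>
    right
    -- lengths are unbounded
    have hlen : ∀ k, ∃ n, k < (L n).length := by
      intro k
      by_contra hk
      push_neg at hk
      set g := Infinite.natEmbedding V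
      have : ∀ i : Fin (k + 1), ∃ n, g i ∈ L n := fun i => hcover (g i)
      choose m hm using this
      set N := Finset.univ.sup m with hN
      have hall : ∀ i : Fin (k + 1), g i ∈ L N := fun i =>
        (hLmono (m i) N (Finset.le_sup (Finset.mem_univ i))).subset (hm i)
      classical
      have hcard : k + 1 ≤ (L N).toFinset.card := by
        have := Finset.card_le_card_of_injOn (f := fun i : Fin (k + 1) => g (i : ℕ))
          (s := Finset.univ) (t := (L N).toFinset)
          (fun i _ => by simpa using hall i)
          (fun i _ j _ hij => Fin.val_injective (g.injective hij))
        simpa using this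
      have : (L N).toFinset.card ≤ k := by
        calc (L N).toFinset.card ≤ (L N).length := (L N).toFinset_card_le
          _ ≤ k := hk N
      omega
    choose N hN using hlen
    set f : ℕ → V := fun k => (L (N k)).get ⟨k, hN k⟩ with hf
    have hagree : ∀ k n (hn : k < (L n).length), (L n).get ⟨k, hn⟩ = f k := by
      intro k n hn
      rcases le_total (N k) n with hle | hle
      · exact ((hLmono (N k) n hle).getElem (hN k)).symm
      · exact (hLmono n (N k) hle).getElem hn
    refine ⟨f, ?_, ?_, ?_⟩
    · intro j k hjk
      have hj : j < (L (N (max j k))).length := lt_of_le_of_lt (le_max_left j k) (hN _)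
      have hk : k < (L (N (max j k))).length := lt_of_le_of_lt (le_max_right j k) (hN _)
      have := (hagree j _ hj).trans (hjk.trans (hagree k _ hk).symm)
      exact ((hLnd _).getElem_inj_iff).mp this
    · intro n
      have h1 : n < (L (N (n + 1))).length := lt_of_le_of_lt (Nat.le_succ n) (hN _)
      have h2 : n + 1 < (L (N (n + 1))).length := hN _
      have := List.isChain_iff_getElem.mp (hLch (N (n + 1))) n (by omega)
      rwa [show (L (N (n + 1)))[n] = f n from hagree n _ (by omega), show (L (N (n + 1)))[n + 1] = f (n + 1) from hagree (n + 1) _ (by omega)] at this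
    · refine Set.eq_univ_iff_forall.mpr fun v => ?_
      obtain ⟨n, hn⟩ := hcover v
      obtain ⟨i, hi, hiv⟩ := List.getElem_of_mem hn
      exact ⟨i, (hagree i n hi).symm.trans hiv⟩
end

section
/- For every edge-colouring c : E(K↔_ℕ) → [r+1] of the complete symmetric digraph on ℕ such that there is no monochromatic directed path of edge-length ℓ_i in colour i for any i ∈ [r], there is a finite partition 𝒰 of ℕ such that for every partition class U ∈ 𝒰 with |U| ≥ 2, the subgraph induced on U by the edges of colour r+1 is strongly <ℵ₀-connected. -/
namespace PSCC

variable {r : ℕ}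

/-- There is a monochromatic path in colour `i` ending at `u` with `n` vertices. -/
def endP (c : ℕ → ℕ → Fin (r + 1)) (i : Fin r) (u n : ℕ) : Prop :=
  ∃ l : List ℕ, IsMonoPathList c i.castSucc l ∧ l.getLast? = some u ∧ l.length = n

/-- There is a monochromatic path in colour `i` starting at `u` with `n` vertices. -/
def startP (c : ℕ → ℕ → Fin (r + 1)) (i : Fin r) (u n : ℕ) : Prop :=
  ∃ l : List ℕ, IsMonoPathList c i.castSucc l ∧ l.head? = some u ∧ l.length = n

noncomputable def AA (c : ℕ → ℕ → Fin (r + 1)) (ℓ : Fin r → ℕ) (i : Fin r) (u : ℕ) : ℕ :=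
  @Nat.findGreatest (endP c i u) (Classical.decPred _) (ℓ i)

noncomputable def BB (c : ℕ → ℕ → Fin (r + 1)) (ℓ : Fin r → ℕ) (i : Fin r) (u : ℕ) : ℕ :=
  @Nat.findGreatest (startP c i u) (Classical.decPred _) (ℓ i)

lemma endP_one (c : ℕ → ℕ → Fin (r + 1)) (i : Fin r) (u : ℕ) : endP c i u 1 :=
  ⟨[u], ⟨List.nodup_singleton u, List.isChain_singleton u⟩, by simp, by simp⟩

lemma startP_one (c : ℕ → ℕ → Fin (r + 1)) (i : Fin r) (u : ℕ) : startP c i u 1 :=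
  ⟨[u], ⟨List.nodup_singleton u, List.isChain_singleton u⟩, by simp, by simp⟩

lemma AA_le (c : ℕ → ℕ → Fin (r + 1)) (ℓ : Fin r → ℕ) (i : Fin r) (u : ℕ) :
    AA c ℓ i u ≤ ℓ i := by
  letI : DecidablePred (endP c i u) := Classical.decPred _
  exact Nat.findGreatest_le (ℓ i)

lemma BB_le (c : ℕ → ℕ → Fin (r + 1)) (ℓ : Fin r → ℕ) (i : Fin r) (u : ℕ) :
    BB c ℓ i u ≤ ℓ i := by
  letI : DecidablePred (startP c i u) := Classical.decPred _
  exact Nat.findGreatest_le (ℓ i)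

lemma AA_spec (c : ℕ → ℕ → Fin (r + 1)) (ℓ : Fin r → ℕ) (hℓ : ∀ i, 0 < ℓ i)
    (i : Fin r) (u : ℕ) : endP c i u (AA c ℓ i u) := by
  letI : DecidablePred (endP c i u) := Classical.decPred _
  exact Nat.findGreatest_spec (hℓ i) (endP_one c i u)

lemma BB_spec (c : ℕ → ℕ → Fin (r + 1)) (ℓ : Fin r → ℕ) (hℓ : ∀ i, 0 < ℓ i)
    (i : Fin r) (u : ℕ) : startP c i u (BB c ℓ i u) := by
  letI : DecidablePred (startP c i u) := Classical.decPred _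
  exact Nat.findGreatest_spec (hℓ i) (startP_one c i u)

/-- All colour-`i` out-neighbours of `v` of the same rank lie on a fixed finite list. -/
lemma out_bound (c : ℕ → ℕ → Fin (r + 1)) (ℓ : Fin r → ℕ) (hℓ : ∀ i, 0 < ℓ i)
    (hno : ∀ i : Fin r,
      ¬ ∃ l : List ℕ, IsMonoPathList c i.castSucc l ∧ l.length = ℓ i + 1)
    (i : Fin r) (v : ℕ) :
    ∃ L : List ℕ, ∀ x, c v x = i.castSucc → AA c ℓ i x = AA c ℓ i v → x ∈ L := by
  obtain ⟨l, hl, hlast, hlen⟩ := AA_spec c ℓ hℓ i v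
  refine ⟨l, fun x hcx hA => ?_⟩
  by_contra hx
  have hmono : IsMonoPathList c i.castSucc (l ++ [x]) := by
    constructor
    · rw [List.nodup_append]
      exact ⟨hl.1, List.nodup_singleton x,
        fun a ha b hb hab => hx (by rw [List.mem_singleton] at hb; rw [← hb, ← hab]; exact ha)⟩
    · refine List.IsChain.append hl.2 (List.isChain_singleton x) ?_
      intro a ha b hb
      rw [hlast, Option.mem_some_iff] at ha
      simp only [List.head?_cons, Option.mem_some_iff] at hb
      subst ha; subst hb; exact hcx
  have hlen' : (l ++ [x]).length = AA c ℓ i v + 1 := by simp [hlen]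
  rcases lt_or_eq_of_le (AA_le c ℓ i v) with h | h
  · have hend : endP c i x (AA c ℓ i v + 1) :=
      ⟨l ++ [x], hmono, by simp, hlen'⟩
    have : ¬ endP c i x (AA c ℓ i v + 1) := by
      letI : DecidablePred (endP c i x) := Classical.decPred _
      refine Nat.findGreatest_is_greatest
        (show Nat.findGreatest (endP c i x) (ℓ i) < AA c ℓ i v + 1 from ?_) (by omega)
      show AA c ℓ i x < AA c ℓ i v + 1
      omega
    exact this hend
  · exact hno i ⟨l ++ [x], hmono, by rw [hlen', h]⟩

/-- All colour-`i` in-neighbours of `w` of the same rank lie on a fixed finite list. -/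
lemma in_bound (c : ℕ → ℕ → Fin (r + 1)) (ℓ : Fin r → ℕ) (hℓ : ∀ i, 0 < ℓ i)
    (hno : ∀ i : Fin r,
      ¬ ∃ l : List ℕ, IsMonoPathList c i.castSucc l ∧ l.length = ℓ i + 1)
    (i : Fin r) (w : ℕ) :
    ∃ L : List ℕ, ∀ x, c x w = i.castSucc → BB c ℓ i x = BB c ℓ i w → x ∈ L := by
  obtain ⟨l, hl, hhead, hlen⟩ := BB_spec c ℓ hℓ i w
  refine ⟨l, fun x hcx hB => ?_⟩
  by_contra hx
  have hmono : IsMonoPathList c i.castSucc (x :: l) := by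
    constructor
    · exact List.nodup_cons.2 ⟨hx, hl.1⟩
    · refine List.isChain_cons.2 ?_
      refine ⟨fun y hy => ?_, hl.2⟩
      rw [hhead, Option.mem_some_iff] at hy
      subst hy; exact hcx
  have hlen' : (x :: l).length = BB c ℓ i w + 1 := by simp [hlen]
  rcases lt_or_eq_of_le (BB_le c ℓ i w) with h | h
  · have hst : startP c i x (BB c ℓ i w + 1) :=
      ⟨x :: l, hmono, by simp, hlen'⟩
    have : ¬ startP c i x (BB c ℓ i w + 1) := by
      letI : DecidablePred (startP c i x) := Classical.decPred _
      refine Nat.findGreatest_is_greatest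
        (show Nat.findGreatest (startP c i x) (ℓ i) < BB c ℓ i w + 1 from ?_) (by omega)
      show BB c ℓ i x < BB c ℓ i w + 1
      omega
    exact this hst
  · exact hno i ⟨x :: l, hmono, by rw [hlen', h]⟩

/-- Core connectivity lemma: on an infinite set on which the rank vectors agree, the
colour `r+1` digraph is strongly `<ℵ₀`-connected. -/
lemma core (c : ℕ → ℕ → Fin (r + 1)) (ℓ : Fin r → ℕ) (hℓ : ∀ i, 0 < ℓ i)
    (hno : ∀ i : Fin r,
      ¬ ∃ l : List ℕ, IsMonoPathList c i.castSucc l ∧ l.length = ℓ i + 1)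
    (U : Set ℕ) (hUinf : U.Infinite)
    (hfib : ∀ x ∈ U, ∀ y ∈ U, ∀ i : Fin r,
      AA c ℓ i x = AA c ℓ i y ∧ BB c ℓ i x = BB c ℓ i y) :
    StronglyCofinConnected (fun x y : U => c x.val y.val = Fin.last r) := by
  intro v w hvw
  have hOut : {x | x ∈ U ∧ c v.1 x ≠ Fin.last r}.Finite := by
    choose L hL using fun i => out_bound c ℓ hℓ hno i v.1
    refine Set.Finite.subset (Set.finite_iUnion fun i : Fin r => (L i).finite_toSet) ?_
    rintro x ⟨hxU, hxc⟩
    obtain ⟨i, hi⟩ := Fin.exists_castSucc_eq.2 hxc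
    exact Set.mem_iUnion.2 ⟨i, hL i x hi.symm ((hfib x hxU v.1 v.2 i).1)⟩
  have hIn : {x | x ∈ U ∧ c x w.1 ≠ Fin.last r}.Finite := by
    choose L hL using fun i => in_bound c ℓ hℓ hno i w.1
    refine Set.Finite.subset (Set.finite_iUnion fun i : Fin r => (L i).finite_toSet) ?_
    rintro x ⟨hxU, hxc⟩
    obtain ⟨i, hi⟩ := Fin.exists_castSucc_eq.2 hxc
    exact Set.mem_iUnion.2 ⟨i, hL i x hi.symm ((hfib x hxU w.1 w.2 i).2)⟩
  set Y : Set ℕ := U \ ({v.1, w.1} ∪ ({x | x ∈ U ∧ c v.1 x ≠ Fin.last r} ∪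
    {x | x ∈ U ∧ c x w.1 ≠ Fin.last r})) with hY
  have hYinf : Y.Infinite :=
    hUinf.diff ((((Set.finite_singleton w.1).insert v.1)).union (hOut.union hIn))
  let g : ℕ ↪ Y := hYinf.natEmbedding
  have hgU : ∀ n, (g n).1 ∈ U := fun n => (g n).2.1
  have hgprop : ∀ n, (g n).1 ≠ v.1 ∧ (g n).1 ≠ w.1 ∧
      c v.1 (g n).1 = Fin.last r ∧ c (g n).1 w.1 = Fin.last r := by
    intro n
    have h2 := (g n).2.2
    simp only [Set.mem_union, Set.mem_insert_iff, Set.mem_singleton_iff, Set.mem_setOf_eq,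
      not_or] at h2
    refine ⟨h2.1.1, h2.1.2, ?_, ?_⟩
    · by_contra hc; exact h2.2.1 ⟨(g n).2.1, hc⟩
    · by_contra hc; exact h2.2.2 ⟨(g n).2.1, hc⟩
  let m : ℕ → U := fun n => ⟨(g n).1, hgU n⟩
  have hm_ne : ∀ k n, k ≠ n → m k ≠ m n := by
    intro k n hkn h
    apply hkn
    apply g.injective
    apply Subtype.ext
    exact congrArg (fun z : U => z.val) h
  refine ⟨fun n => [v, m n, w], fun n => ?_, fun k n hkn => ?_⟩
  · obtain ⟨h1, h2, h3, h4⟩ := hgprop n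
    refine ⟨?_, ?_, rfl, by simp⟩
    · refine List.nodup_cons.2 ⟨?_, List.nodup_cons.2 ⟨?_, List.nodup_singleton _⟩⟩
      · simp only [List.mem_cons, List.mem_singleton, List.not_mem_nil, or_false]
        push_neg
        refine ⟨fun h => absurd (congrArg Subtype.val h).symm h1, hvw⟩
      · simp only [List.mem_singleton, List.mem_cons, List.not_mem_nil, or_false]
        exact fun h => h2 (congrArg Subtype.val h)
    · simp only [List.isChain_cons_cons, List.isChain_singleton, and_true]
      exact List.isChain_cons_cons.2 ⟨h3, List.isChain_cons_cons.2 ⟨h4, List.isChain_singleton _⟩⟩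
  · constructor
    · intro h
      injection h with h1 h2
      injection h2 with h3 h4
      exact hm_ne k n hkn h3
    · intro x hxk hxn
      simp only [List.mem_cons, List.mem_singleton, List.not_mem_nil, or_false] at hxk hxn
      rcases hxk with h | h | h
      · exact Or.inl h
      · rcases hxn with h' | h' | h'
        · exact Or.inl h'
        · exact absurd (h.symm.trans h') (hm_ne k n hkn)
        · exact Or.inr h'
      · exact Or.inr h

end PSCC

/-- For every `(r+1)`-edge-colouring of the complete symmetric digraph on `ℕ` with no
monochromatic directed path of edge-length `ℓ i` in colour `i` for any `i ∈ [r]`, there is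
a finite partition `𝒰` of `ℕ` such that for every class `U ∈ 𝒰` with at least two
elements, the subgraph induced on `U` by the edges of colour `r+1` is strongly
`<ℵ₀`-connected. -/
theorem partition_into_stronglyCofinConnected (r : ℕ) (c : ℕ → ℕ → Fin (r + 1))
    (ℓ : Fin r → ℕ) (hℓ : ∀ i, 0 < ℓ i)
    (hno : ∀ i : Fin r,
      ¬ ∃ l : List ℕ, IsMonoPathList c i.castSucc l ∧ l.length = ℓ i + 1) :
    ∃ 𝒰 : Finset (Set ℕ),
      (∀ U ∈ 𝒰, U.Nonempty) ∧
      (∀ U ∈ 𝒰, ∀ U' ∈ 𝒰, U ≠ U' → Disjoint U U') ∧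
      (⋃ U ∈ 𝒰, U) = Set.univ ∧
      ∀ U ∈ 𝒰, U.Nontrivial →
        StronglyCofinConnected (fun x y : U => c x.val y.val = Fin.last r) := by
  classical
  set t : ℕ → (Fin r → ℕ × ℕ) :=
    fun u i => (PSCC.AA c ℓ i u, PSCC.BB c ℓ i u) with ht
  have hrange : (Set.range t).Finite := by
    refine Set.Finite.subset (Set.Finite.pi (fun i : Fin r =>
      (Set.finite_Iic (ℓ i)).prod (Set.finite_Iic (ℓ i)))) ?_
    rintro f ⟨u, rfl⟩
    intro i _
    exact ⟨PSCC.AA_le c ℓ i u, PSCC.BB_le c ℓ i u⟩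
  have hbad : {u : ℕ | (t ⁻¹' {t u}).Finite}.Finite := by
    have hsub : {u : ℕ | (t ⁻¹' {t u}).Finite} ⊆
        ⋃ τ ∈ {τ | τ ∈ Set.range t ∧ (t ⁻¹' {τ}).Finite}, t ⁻¹' {τ} := by
      intro u hu
      exact Set.mem_biUnion ⟨⟨u, rfl⟩, hu⟩ rfl
    refine Set.Finite.subset (Set.Finite.biUnion
      (hrange.subset (fun τ hτ => hτ.1)) (fun τ hτ => hτ.2)) hsub
  refine ⟨(hrange.toFinset.filter fun τ => (t ⁻¹' {τ}).Infinite).image (fun τ => t ⁻¹' {τ})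
      ∪ hbad.toFinset.image (fun u => ({u} : Set ℕ)), ?_, ?_, ?_, ?_⟩
  · intro U hU
    rcases Finset.mem_union.1 hU with h | h
    · obtain ⟨τ, hτ, rfl⟩ := Finset.mem_image.1 h
      exact ((Finset.mem_filter.1 hτ).2).nonempty
    · obtain ⟨u, _, rfl⟩ := Finset.mem_image.1 h
      exact ⟨u, rfl⟩
  · intro U hU U' hU' hne
    rw [Set.disjoint_left]
    intro x hx hx'
    rcases Finset.mem_union.1 hU with h | h <;> rcases Finset.mem_union.1 hU' with h' | h'
    · obtain ⟨τ, hτ, rfl⟩ := Finset.mem_image.1 h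
      obtain ⟨τ', hτ', rfl⟩ := Finset.mem_image.1 h'
      have : τ = τ' := by
        have h1 : t x = τ := hx
        have h2 : t x = τ' := hx'
        rw [← h1, h2]
      exact hne (by rw [this])
    · obtain ⟨τ, hτ, rfl⟩ := Finset.mem_image.1 h
      obtain ⟨u, hu, rfl⟩ := Finset.mem_image.1 h'
      have hxc : x = u := hx'
      have hfin : (t ⁻¹' {t u}).Finite := (Set.Finite.mem_toFinset hbad).1 hu
      have hinf : (t ⁻¹' {τ}).Infinite := (Finset.mem_filter.1 hτ).2
      have : t x = τ := hx
      rw [hxc] at this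
      rw [this] at hfin
      exact hinf hfin
    · obtain ⟨u, hu, rfl⟩ := Finset.mem_image.1 h
      obtain ⟨τ, hτ, rfl⟩ := Finset.mem_image.1 h'
      have hxc : x = u := hx
      have hfin : (t ⁻¹' {t u}).Finite := (Set.Finite.mem_toFinset hbad).1 hu
      have hinf : (t ⁻¹' {τ}).Infinite := (Finset.mem_filter.1 hτ).2
      have : t x = τ := hx'
      rw [hxc] at this
      rw [this] at hfin
      exact hinf hfin
    · obtain ⟨u, _, rfl⟩ := Finset.mem_image.1 h
      obtain ⟨u', _, rfl⟩ := Finset.mem_image.1 h'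
      have hx1 : x = u := hx
      have hx2 : x = u' := hx'
      exact hne (by rw [show u = u' from hx1.symm.trans hx2])
  · apply Set.eq_univ_of_forall
    intro u
    simp only [Set.mem_iUnion]
    by_cases hcase : (t ⁻¹' {t u}).Infinite
    · refine ⟨t ⁻¹' {t u}, ?_, rfl⟩
      refine Finset.mem_union_left _ (Finset.mem_image.2 ⟨t u, ?_, rfl⟩)
      exact Finset.mem_filter.2 ⟨(Set.Finite.mem_toFinset hrange).2 ⟨u, rfl⟩, hcase⟩
    · refine ⟨{u}, ?_, rfl⟩
      refine Finset.mem_union_right _ (Finset.mem_image.2 ⟨u, ?_, rfl⟩)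
      exact (Set.Finite.mem_toFinset hbad).2 (Set.not_infinite.1 hcase)
  · intro U hU hUnt
    rcases Finset.mem_union.1 hU with h | h
    · obtain ⟨τ, hτ, rfl⟩ := Finset.mem_image.1 h
      have hinf : (t ⁻¹' {τ}).Infinite := (Finset.mem_filter.1 hτ).2
      refine PSCC.core c ℓ hℓ hno _ hinf ?_
      intro x hx y hy i
      have hx' : t x = τ := hx
      have hy' : t y = τ := hy
      have : t x = t y := by rw [hx', hy']
      have := congrFun this i
      exact ⟨congrArg Prod.fst this, congrArg Prod.snd this⟩
    · obtain ⟨u, _, rfl⟩ := Finset.mem_image.1 h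
      obtain ⟨a, ha, b, hb, hab⟩ := hUnt
      have ha' : a = u := ha
      have hb' : b = u := hb
      exact absurd (ha'.trans hb'.symm) hab
end

section
/- For every edge-colouring c : E(K↔_ℕ) → [r+1] of the complete symmetric digraph on ℕ for which there is no monochromatic directed path of edge-length ℓ_i in colour i for any i ∈ [r], the vertex set ℕ can be covered by ∏_{i≤r} ℓ_i pairwise vertex-disjoint monochromatic directed paths in colour r+1. -/
open Relation

section Aux
variable {α : Type*}

def Acyc (F : α → α → Prop) : Prop := ∀ x, ¬ TransGen F x x

lemma transGen_of_chain'_aux {F : α → α → Prop} {l : List α} (hl : l.Chain' F) :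
    ∀ (b a : ℕ) (ha : a < l.length) (hb : b < l.length), a < b →
      TransGen F (l.get ⟨a, ha⟩) (l.get ⟨b, hb⟩) := by
  intro b
  induction b with
  | zero => omega
  | succ b ih =>
    intro a ha hb hab
    have hedge : F (l.get ⟨b, by omega⟩) (l.get ⟨b + 1, hb⟩) := by
      have := List.isChain_iff_getElem.mp hl b (by omega)
      exact this
    rcases Nat.lt_succ_iff_lt_or_eq.mp hab with h | rfl
    · exact (ih a ha (by omega) h).tail hedge
    · exact .single hedge

lemma nodup_of_chain'_acyc {F : α → α → Prop} (hF : Acyc F) {l : List α}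
    (hl : l.Chain' F) : l.Nodup := by
  rw [List.nodup_iff_injective_get]
  intro a b hab
  by_contra hne
  have hne' : (a : ℕ) ≠ (b : ℕ) := fun h => hne (Fin.ext h)
  rcases hne'.lt_or_gt with h | h
  · have t := transGen_of_chain'_aux hl b a a.isLt b.isLt h
    simp only [Fin.eta] at t
    rw [hab] at t
    exact hF _ t
  · have t := transGen_of_chain'_aux hl a b b.isLt a.isLt h
    simp only [Fin.eta] at t
    rw [hab] at t
    exact hF _ t

lemma rtg_union_single {F : α → α → Prop} {u v : α} {a b : α}
    (h : ReflTransGen (fun x y => F x y ∨ (x = u ∧ y = v)) a b) :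
    ReflTransGen F a b ∨ (ReflTransGen F a u ∧ ReflTransGen F v b) := by
  induction h using ReflTransGen.head_induction_on with
  | refl => exact Or.inl .refl
  | head hstep _ ih =>
    rcases hstep with hf | ⟨rfl, rfl⟩
    · rcases ih with h' | ⟨p, q⟩
      · exact Or.inl (h'.head hf)
      · exact Or.inr ⟨p.head hf, q⟩
    · rcases ih with h' | ⟨_, q⟩
      · exact Or.inr ⟨.refl, h'⟩
      · exact Or.inr ⟨.refl, q⟩

lemma acyc_insert {F : α → α → Prop} {u v : α} (hF : Acyc F)
    (hvu : ¬ ReflTransGen F v u) :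
    Acyc (fun x y => F x y ∨ (x = u ∧ y = v)) := by
  intro x hx
  rw [TransGen.head'_iff] at hx
  obtain ⟨y, hxy, hyx⟩ := hx
  rcases hxy with hf | ⟨rfl, rfl⟩
  · rcases rtg_union_single hyx with h | ⟨h1, h2⟩
    · exact hF x (TransGen.head'_iff.mpr ⟨y, hf, h⟩)
    · exact hvu ((h2.tail hf).trans h1)
  · rcases rtg_union_single hyx with h | ⟨h1, _⟩
    · exact hvu h
    · exact hvu h1

lemma transGen_sUnion_chain {C : Set (Set (α × α))} (hC : IsChain (· ⊆ ·) C) {a b : α}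
    (h : TransGen (fun x y => (x, y) ∈ ⋃₀ C) a b) :
    ∃ F ∈ C, TransGen (fun x y => (x, y) ∈ F) a b := by
  induction h with
  | single h => obtain ⟨F, hF, hmem⟩ := h; exact ⟨F, hF, .single hmem⟩
  | tail _ h2 ih =>
    obtain ⟨F1, hF1, t1⟩ := ih
    obtain ⟨F2, hF2, m2⟩ := h2
    rcases hC.total hF1 hF2 with hsub | hsub
    · exact ⟨F2, hF2, (TransGen.mono (fun x y hxy => hsub hxy) _ _ t1).tail m2⟩
    · exact ⟨F1, hF1, t1.tail (hsub m2)⟩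

end Aux

lemma exists_rank {r : ℕ} (c : ℕ → ℕ → Fin (r + 1)) {i : Fin r} {L : ℕ} (hL : 0 < L)
    (hno : ¬ ∃ l : List ℕ, IsMonoPathList c i.castSucc l ∧ l.length = L + 1) :
    ∃ φ : ℕ → Fin L, ∀ u v : ℕ, u ≠ v → c u v = i.castSucc → φ u ≠ φ v := by
  classical
  set E : Set (ℕ × ℕ) := {p | p.1 ≠ p.2 ∧ c p.1 p.2 = i.castSucc} with hE
  obtain ⟨F, hFS⟩ := zorn_subset
      {F : Set (ℕ × ℕ) | F ⊆ E ∧ Acyc (fun a b => (a, b) ∈ F)} (by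
    intro C hCS hC
    refine ⟨⋃₀ C, ⟨?_, ?_⟩, fun s hs => Set.subset_sUnion_of_mem hs⟩
    · exact Set.sUnion_subset fun s hs => (hCS hs).1
    · intro x hx
      obtain ⟨G, hG, hGt⟩ := transGen_sUnion_chain hC hx
      exact (hCS hG).2 x hGt)
  obtain ⟨⟨hFE, hFacyc⟩, hFmax⟩ := hFS
  -- walks
  set Q : ℕ → ℕ → Prop := fun v n => ∃ l : List ℕ,
    l.Chain' (fun a b => (a, b) ∈ F) ∧ l.getLast? = some v ∧ l.length = n + 1 with hQ
  have hQbound : ∀ v n, Q v n → n ≤ L - 1 := by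
    intro v n ⟨l, hchain, _, hlen⟩
    by_contra hgt
    push_neg at hgt
    have hnd : l.Nodup := nodup_of_chain'_acyc hFacyc hchain
    have hcol : l.Chain' (fun a b => c a b = i.castSucc) :=
      hchain.imp fun a b h => (hFE h).2
    refine hno ⟨l.take (L + 1), ⟨(l.take_sublist _).nodup hnd, hcol.take _⟩, ?_⟩
    rw [List.length_take]
    omega
  have hQ0 : ∀ v, Q v 0 := fun v => ⟨[v], List.isChain_singleton v, rfl, rfl⟩
  set h : ℕ → ℕ := fun v => Nat.findGreatest (Q v) (L - 1) with hh
  have hspec : ∀ v, Q v (h v) := fun v => Nat.findGreatest_spec (Nat.zero_le _) (hQ0 v)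
  have hle : ∀ v n, Q v n → n ≤ h v := fun v n hn =>
    Nat.le_findGreatest (hQbound v n hn) hn
  have hstep : ∀ u v, (u, v) ∈ F → h u < h v := by
    intro u v huv
    obtain ⟨l, hchain, hlast, hlen⟩ := hspec u
    have : Q v (h u + 1) := by
      refine ⟨l ++ [v], ?_, ?_, by simp [hlen]⟩
      · rw [List.Chain', List.isChain_append]
        refine ⟨hchain, List.isChain_singleton v, ?_⟩
        intro x hx y hy
        simp only [List.head?_cons, Option.mem_def, Option.some.injEq] at hy
        rw [hlast] at hx
        simp only [Option.mem_def, Option.some.injEq] at hx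
        subst hx; subst hy
        exact huv
      · simp [List.getLast?_append]
    have := hle v _ this
    omega
  have htrans : ∀ u v, TransGen (fun a b => (a, b) ∈ F) v u → h v < h u := by
    intro u v htg
    induction htg with
    | single h1 => exact hstep _ _ h1
    | tail _ h2 ih => exact ih.trans (hstep _ _ h2)
  refine ⟨fun v => ⟨h v, lt_of_le_of_lt (Nat.findGreatest_le _) (by omega)⟩, ?_⟩
  intro u v hne hc heq
  have heq' : h u = h v := by simpa using heq
  have hEmem : (u, v) ∈ E := ⟨hne, hc⟩
  by_cases hmem : (u, v) ∈ F
  · have := hstep u v hmem; omega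
  · have hrtg : ReflTransGen (fun a b => (a, b) ∈ F) v u := by
      by_contra hvu
      have hac : Acyc (fun x y => (x, y) ∈ F ∨ (x = u ∧ y = v)) :=
        acyc_insert hFacyc hvu
      have hins : insert (u, v) F ∈
          {F : Set (ℕ × ℕ) | F ⊆ E ∧ Acyc (fun a b => (a, b) ∈ F)} := by
        constructor
        · exact Set.insert_subset hEmem hFE
        · intro x hx
          refine hac x (TransGen.mono ?_ _ _ hx)
          intro a b hab
          rcases Set.mem_insert_iff.mp hab with hab | hab
          · exact Or.inr ⟨congrArg Prod.fst hab, congrArg Prod.snd hab⟩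
          · exact Or.inl hab
      exact hmem (hFmax hins (Set.subset_insert _ _) (Set.mem_insert _ _))
    rcases reflTransGen_iff_eq_or_transGen.mp hrtg with h1 | h1
    · exact hne h1
    · have := htrans u v h1; omega

lemma path_of_clique {N : ℕ} (c : ℕ → ℕ → Fin N) (j : Fin N) (S : Set ℕ)
    (h : ∀ u ∈ S, ∀ v ∈ S, u ≠ v → c u v = j) : IsMonoPathSet c j S := by
  rcases S.finite_or_infinite with hfin | hinf
  · left
    refine ⟨hfin.toFinset.toList, ⟨Finset.nodup_toList _, ?_⟩, ?_⟩
    · rw [List.Chain', List.isChain_iff_getElem]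
      intro k hk
      have hmem : ∀ x ∈ hfin.toFinset.toList, x ∈ S := by
        intro x hx
        rw [Finset.mem_toList, Set.Finite.mem_toFinset] at hx
        exact hx
      have hinj := List.nodup_iff_injective_get.mp (Finset.nodup_toList hfin.toFinset)
      refine h _ (hmem _ (List.getElem_mem _)) _ (hmem _ (List.getElem_mem _)) ?_
      intro hEq
      have := hinj (a₁ := ⟨k, by omega⟩) (a₂ := ⟨k + 1, hk⟩) hEq
      simp only [Fin.mk.injEq] at this
      omega
    · ext x
      simp [Finset.mem_toList, Set.Finite.mem_toFinset]
  · right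
    refine ⟨Nat.nth (· ∈ S), Nat.nth_injective hinf, fun n => ?_,
      (Nat.range_nth_of_infinite hinf).symm⟩
    refine h _ (Nat.nth_mem_of_infinite hinf n) _ (Nat.nth_mem_of_infinite hinf (n + 1)) ?_
    intro hEq
    have := Nat.nth_injective hinf hEq
    omega


/-- For every `(r+1)`-edge-colouring ... -/
theorem decomposition_nat (r : ℕ) (c : ℕ → ℕ → Fin (r + 1)) (ℓ : Fin r → ℕ)
    (hℓ : ∀ i, 0 < ℓ i)
    (hno : ∀ i : Fin r,
      ¬ ∃ l : List ℕ, IsMonoPathList c i.castSucc l ∧ l.length = ℓ i + 1) :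
    ∃ P : Fin (∏ i, ℓ i) → Set ℕ,
      (∀ k, IsMonoPathSet c (Fin.last r) (P k)) ∧
      (Pairwise fun a b => Disjoint (P a) (P b)) ∧
      (⋃ k, P k) = Set.univ := by
  have key : ∀ i : Fin r, ∃ φ : ℕ → Fin (ℓ i),
      ∀ u v : ℕ, u ≠ v → c u v = i.castSucc → φ u ≠ φ v :=
    fun i => exists_rank c (hℓ i) (hno i)
  choose φ hφ using key
  refine ⟨fun k => {v | finPiFinEquiv (fun i => φ i v) = k}, ?_, ?_, ?_⟩
  · intro k
    apply path_of_clique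
    intro u hu v hv huv
    rcases Fin.eq_castSucc_or_eq_last (c u v) with ⟨j, hj⟩ | hl
    · exfalso
      apply hφ j u v huv hj
      have h1 : (fun i => φ i u) = fun i => φ i v := by
        apply finPiFinEquiv.injective
        rw [Set.mem_setOf_eq] at hu hv
        rw [hu, hv]
      exact congrFun h1 j
    · exact hl
  · intro a b hab
    rw [Set.disjoint_left]
    intro v hva hvb
    rw [Set.mem_setOf_eq] at hva hvb
    exact hab (hva ▸ hvb)
  · ext v
    simp only [Set.mem_iUnion, Set.mem_setOf_eq, Set.mem_univ, iff_true]
    exact ⟨finPiFinEquiv (fun i => φ i v), rfl⟩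
end

section
/- Let c : E(K↔_ℕ) → [r+1] be an edge-colouring of the complete symmetric digraph on ℕ containing no monochromatic directed path in colour k of edge-length ℓ_k. For each 0 ≤ i < ℓ_k let A_i be the set of vertices a such that the longest monochromatic directed path in colour k with first vertex a has edge-length exactly i. Then the nonempty A_i form a finite partition of ℕ, and for every i and every a ∈ A_i, the set {a' ∈ A_i : c(a', a) = k} has cardinality at most ℓ_k. -/
/-- Let `c` be an `(r+1)`-edge-colouring of the complete symmetric digraph on `ℕ` with no
monochromatic directed path in colour `k` of edge-length `ℓk`. For `i : ℕ`, let `A i` be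
the set of vertices `a` such that the longest monochromatic directed path in colour `k`
starting at `a` has edge-length exactly `i` (it has a path of `i + 1` vertices starting at
`a`, but none with `i + 2` vertices). Then every vertex lies in `A i` for some `i < ℓk`,
the `A i` are pairwise disjoint (so the nonempty ones form a finite partition of `ℕ`), and
for every `i` and every `a ∈ A i`, the set `{a' ∈ A i : c a' a = k}` has at most `ℓk`
elements. -/
theorem partition_by_longest_path (r : ℕ) (c : ℕ → ℕ → Fin (r + 1)) (k : Fin (r + 1))
    (ℓk : ℕ) (hℓk : 0 < ℓk)
    (hno : ¬ ∃ l : List ℕ, IsMonoPathList c k l ∧ l.length = ℓk + 1)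
    (A : ℕ → Set ℕ)
    (hA : ∀ i a, a ∈ A i ↔
      (∃ l : List ℕ, IsMonoPathList c k l ∧ l.head? = some a ∧ l.length = i + 1) ∧
      ¬ ∃ l : List ℕ, IsMonoPathList c k l ∧ l.head? = some a ∧ l.length = i + 2) :
    (∀ a : ℕ, ∃ i < ℓk, a ∈ A i) ∧
    (∀ i j, i ≠ j → Disjoint (A i) (A j)) ∧
    (∀ i, ∀ a ∈ A i, {a' ∈ A i | c a' a = k}.encard ≤ ℓk) := by
  classical
  set P : ℕ → ℕ → Prop := fun a m =>
    ∃ l : List ℕ, IsMonoPathList c k l ∧ l.head? = some a ∧ l.length = m + 1 with hPdef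
  have hstep : ∀ a m, P a (m + 1) → P a m := by
    rintro a m ⟨l, ⟨hn, hc⟩, hh, hl⟩
    refine ⟨l.take (m + 1), ⟨hn.sublist (List.take_sublist _ _), hc.take _⟩, ?_, ?_⟩
    · cases l with
      | nil => simp at hl
      | cons x xs => simpa using hh
    · simp [List.length_take, hl]
  have hmono : ∀ a n m, m ≤ n → P a n → P a m := by
    intro a n
    induction n with
    | zero => intro m hm hp; obtain rfl := Nat.le_zero.mp hm; exact hp
    | succ n ih =>
      intro m hm hp
      by_cases h : m = n + 1
      · exact h ▸ hp
      · exact ih m (by omega) (hstep a n hp)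
  have hzero : ∀ a, P a 0 := fun a => ⟨[a], ⟨by simp, List.isChain_singleton _⟩, rfl, rfl⟩
  have hnot : ∀ a, ¬ P a ℓk := by
    rintro a ⟨l, h1, _, h3⟩
    exact hno ⟨l, h1, h3⟩
  have hmem : ∀ i a, a ∈ A i ↔ P a i ∧ ¬ P a (i + 1) := by
    intro i a; exact hA i a
  refine ⟨?_, ?_, ?_⟩
  · intro a
    have hex : ∃ m, ¬ P a m := ⟨ℓk, hnot a⟩
    set i := Nat.find hex with hi
    have hip : ¬ P a i := Nat.find_spec hex
    have hipos : 0 < i := by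
      rcases Nat.eq_zero_or_pos i with h | h
      · exact absurd (h ▸ hzero a) (h ▸ hip)
      · exact h
    have hile : i ≤ ℓk := Nat.find_min' hex (hnot a)
    refine ⟨i - 1, by omega, (hmem (i - 1) a).mpr ⟨?_, ?_⟩⟩
    · by_contra h
      exact absurd (Nat.find_min' hex h) (by omega)
    · have : i - 1 + 1 = i := by omega
      rw [this]; exact hip
  · intro i j hne
    rw [Set.disjoint_left]
    intro a hai haj
    obtain ⟨h1, h2⟩ := (hmem i a).mp hai
    obtain ⟨h3, h4⟩ := (hmem j a).mp haj
    rcases hne.lt_or_gt with h | h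
    · exact h2 (hmono a j (i + 1) (by omega) h3)
    · exact h4 (hmono a i (j + 1) (by omega) h1)
  · intro i a ha
    obtain ⟨⟨l, hl, hh, hlen⟩, hno2⟩ := (hmem i a).mp ha
    have hilt : i < ℓk := by
      by_contra h
      exact hnot a (hmono a i ℓk (by omega) ((hmem i a).mp ha).1)
    have hsub : {a' ∈ A i | c a' a = k} ⊆ ↑l.toFinset := by
      rintro a' ⟨ha', hc'⟩
      by_contra hm
      have hnl : a' ∉ l := by simpa using hm
      have hP : P a' (i + 1) := by
        refine ⟨a' :: l, ⟨List.nodup_cons.mpr ⟨hnl, hl.1⟩, ?_⟩, rfl, by simp [hlen]⟩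
        refine List.isChain_cons.mpr ⟨?_, hl.2⟩
        intro y hy
        rw [hh] at hy
        cases hy
        exact hc'
      exact ((hmem i a').mp ha').2 hP
    calc {a' ∈ A i | c a' a = k}.encard ≤ (↑l.toFinset : Set ℕ).encard :=
          Set.encard_mono hsub
      _ = (l.toFinset.card : ℕ∞) := Set.encard_coe_eq_coe_finsetCard _
      _ ≤ (ℓk : ℕ∞) := by
          have h1 : l.toFinset.card ≤ l.length := l.toFinset_card_le
          have : l.toFinset.card ≤ ℓk := by omega
          exact_mod_cast this
end

section
/- Let c : E(K↔_ℕ) → [r+1] be an edge-colouring of the complete symmetric digraph on ℕ, let k ∈ [r+1] and m ∈ ℕ, and let V ⊆ ℕ be an infinite set such that for every v ∈ V the set {v' ∈ V : c(v', v) ≤ k} has cardinality at most m. Then the set X(V) = {v ∈ V : {v' ∈ V : c(v, v') > k} is finite} has cardinality at most m. -/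
/-- Let `c` be an `(r+1)`-edge-colouring of the complete symmetric digraph on `ℕ`, `k` a
colour, `m ∈ ℕ`, and `V ⊆ ℕ` an infinite set such that for every `v ∈ V` the set
`{v' ∈ V : c v' v ≤ k}` has at most `m` elements. Then the set
`X(V) = {v ∈ V : {v' ∈ V : c v v' > k} is finite}` has at most `m` elements. -/
theorem few_vertices_with_finite_outneighbourhood (r : ℕ) (c : ℕ → ℕ → Fin (r + 1))
    (k : Fin (r + 1)) (m : ℕ) (V : Set ℕ) (hV : V.Infinite)
    (h : ∀ v ∈ V, {v' ∈ V | c v' v ≤ k}.encard ≤ m) :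
    {v ∈ V | {v' ∈ V | k < c v v'}.Finite}.encard ≤ m := by
  by_contra h'
  push_neg at h'
  have hm1 : (m + 1 : ℕ∞) ≤ {v ∈ V | {v' ∈ V | k < c v v'}.Finite}.encard := by
    exact Order.add_one_le_of_lt h'
  obtain ⟨S, hS, hScard⟩ := Set.exists_subset_encard_eq hm1
  have hSfin : S.Finite := Set.finite_of_encard_eq_coe (by exact_mod_cast hScard)
  -- union of bad sets
  have hF : (⋃ v ∈ S, {v' ∈ V | k < c v v'}).Finite := by
    apply Set.Finite.biUnion hSfin
    intro v hv
    exact (hS hv).2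
  have hVleft : (V \ ((⋃ v ∈ S, {v' ∈ V | k < c v v'}) ∪ S)).Infinite :=
    hV.diff (hF.union hSfin)
  obtain ⟨w, hw⟩ := hVleft.nonempty
  have hwV : w ∈ V := hw.1
  have hsub : S ⊆ {v' ∈ V | c v' w ≤ k} := by
    intro v hv
    refine ⟨(hS hv).1, ?_⟩
    by_contra hc
    push_neg at hc
    exact hw.2 (Set.mem_union_left _ (Set.mem_biUnion hv ⟨hwV, hc⟩))
  have := (Set.encard_le_encard hsub).trans (h w hwV)
  rw [hScard] at this
  have : (m + 1 : ℕ∞) ≤ m := this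
  exact absurd this (by exact_mod_cast Nat.not_succ_le_self m)
end

section
/- Let c : E(K↔_ℕ) → [r+1] be an edge-colouring of the complete symmetric digraph on ℕ, and let U and U' be disjoint infinite subsets of ℕ such that the subgraph induced on each of U and U' by the edges of colour r+1 is strongly <ℵ₀-connected. If there exists an infinite directed matching from U to U' in colour r+1 and an infinite directed matching from U' to U in colour r+1, then the subgraph induced on U ∪ U' by the edges of colour r+1 is strongly <ℵ₀-connected. -/
/-- `e` enumerates an infinite directed matching from `A` to `B` in colour `j`: an infinite
set of directed edges of colour `j` from `A` to `B`, no two of which share an endpoint. -/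
def IsInfiniteDirMatching {N : ℕ} (c : ℕ → ℕ → Fin N) (j : Fin N) (A B : Set ℕ)
    (e : ℕ → ℕ × ℕ) : Prop :=
  (∀ n, (e n).1 ∈ A ∧ (e n).2 ∈ B ∧ c (e n).1 (e n).2 = j ∧ (e n).1 ≠ (e n).2) ∧
  (∀ m n, m ≠ n →
    (e m).1 ≠ (e n).1 ∧ (e m).1 ≠ (e n).2 ∧ (e m).2 ≠ (e n).1 ∧ (e m).2 ≠ (e n).2)

section Helpers

variable {r : ℕ} {c : ℕ → ℕ → Fin (r + 1)}

/-- From strong connectivity inside `S`, get one path from `v` to `a` whose internal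
vertices avoid a given finite set `X`. -/
lemma exists_path_avoiding {S : Set ℕ}
    (hc : StronglyCofinConnected (fun x y : S => c x.val y.val = Fin.last r))
    (v a : S) (h : v ≠ a) (X : Finset ℕ) :
    ∃ L : List S, L.Nodup ∧ L.Chain' (fun x y => c x.val y.val = Fin.last r) ∧
      L.head? = some v ∧ L.getLast? = some a ∧
      ∀ x ∈ L, x ≠ v → x ≠ a → x.val ∉ X := by
  obtain ⟨P, h1, h2⟩ := hc v a h
  have hbad : {n | ∃ x ∈ P n, x ≠ v ∧ x ≠ a ∧ x.val ∈ X}.Finite := by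
    have hsub : {n | ∃ x ∈ P n, x ≠ v ∧ x ≠ a ∧ x.val ∈ X} ⊆
        ⋃ t ∈ (X : Set ℕ), {n | ∃ x ∈ P n, x ≠ v ∧ x ≠ a ∧ x.val = t} := by
      rintro n ⟨x, hx, hxv, hxa, hxX⟩
      exact Set.mem_biUnion hxX ⟨x, hx, hxv, hxa, rfl⟩
    refine Set.Finite.subset (Set.Finite.biUnion X.finite_toSet fun t _ => ?_) hsub
    apply Set.Subsingleton.finite
    rintro m ⟨x, hx, hxv, hxa, hxt⟩ n ⟨y, hy, hyv, hya, hyt⟩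
    by_contra hmn
    have hxy : x = y := Subtype.ext (hxt.trans hyt.symm)
    rcases (h2 m n hmn).2 x hx (hxy ▸ hy) with h' | h'
    · exact hxv h'
    · exact hxa h'
  obtain ⟨n, hn⟩ := hbad.infinite_compl.nonempty
  refine ⟨P n, (h1 n).1, (h1 n).2.1, (h1 n).2.2.1, (h1 n).2.2.2, ?_⟩
  intro x hx hxv hxa hxX
  exact hn ⟨x, hx, hxv, hxa, hxX⟩

/-- Abstract builder: if for every finite set of naturals we can find a path from `v`
to `w` with a nontrivial interior avoiding that set (measured through `val`), then we
can build infinitely many pairwise internally disjoint paths. -/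
lemma build_paths {V : Type*} (val : V → ℕ) (E : V → V → Prop) (v w : V)
    (H : ∀ X : Finset ℕ, ∃ L : List V,
      (L.Nodup ∧ L.Chain' E ∧ L.head? = some v ∧ L.getLast? = some w) ∧
      (∀ x ∈ L, x ≠ v → x ≠ w → val x ∉ X) ∧ (∃ x ∈ L, x ≠ v ∧ x ≠ w)) :
    ∃ P : ℕ → List V,
      (∀ n, (P n).Nodup ∧ (P n).Chain' E ∧ (P n).head? = some v ∧ (P n).getLast? = some w) ∧
      (∀ m n, m ≠ n → P m ≠ P n ∧ ∀ x, x ∈ P m → x ∈ P n → x = v ∨ x = w) := by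
  choose g hg1 hg2 hg3 using H
  classical
  let used : ℕ → Finset ℕ := fun n =>
    Nat.rec (∅ : Finset ℕ) (fun _ Xp => Xp ∪ ((g Xp).map val).toFinset) n
  have hused : ∀ n, used (n + 1) = used n ∪ ((g (used n)).map val).toFinset := fun _ => rfl
  have hmono : ∀ m n, m ≤ n → used m ⊆ used n := by
    intro m n hmn
    induction n with
    | zero => simp_all
    | succ k ih =>
      rcases Nat.lt_or_ge m (k + 1) with h | h
      · exact (ih (Nat.lt_succ_iff.mp h)).trans (by rw [hused]; exact Finset.subset_union_left)
      · have : m = k + 1 := le_antisymm hmn h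
        subst this; exact subset_rfl
  set P : ℕ → List V := fun n => g (used n) with hP
  have hmem : ∀ m n, m < n → ∀ x ∈ P m, val x ∈ used n := by
    intro m n hmn x hx
    have : val x ∈ ((g (used m)).map val).toFinset := by
      simp only [List.mem_toFinset, List.mem_map]
      exact ⟨x, hx, rfl⟩
    exact hmono (m + 1) n hmn ((hused m ▸ Finset.subset_union_right) this)
  have key : ∀ m n, m < n → P m ≠ P n ∧ ∀ x, x ∈ P m → x ∈ P n → x = v ∨ x = w := by
    intro m n hmn
    constructor
    · intro heq
      obtain ⟨x, hx, hxv, hxw⟩ := hg3 (used n)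
      exact hg2 (used n) x hx hxv hxw (hmem m n hmn x (heq ▸ hx))
    · intro x hxm hxn
      by_contra hcon
      push_neg at hcon
      exact hg2 (used n) x hxn hcon.1 hcon.2 (hmem m n hmn x hxm)
  refine ⟨P, fun n => hg1 (used n), ?_⟩
  intro m n hmn
  rcases lt_or_gt_of_ne hmn with h | h
  · exact key m n h
  · obtain ⟨h1, h2⟩ := key n m h
    exact ⟨h1.symm, fun x hxm hxn => h2 x hxn hxm⟩

/-- The cross case: a path system between a vertex of `A` and a vertex of `B`,
using a matching from `A` to `B`. -/
lemma cross_case {W A B : Set ℕ} (hAW : A ⊆ W) (hBW : B ⊆ W) (hdisjAB : Disjoint A B)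
    (hcA : StronglyCofinConnected (fun x y : A => c x.val y.val = Fin.last r))
    (hcB : StronglyCofinConnected (fun x y : B => c x.val y.val = Fin.last r))
    {e : ℕ → ℕ × ℕ} (he : IsInfiniteDirMatching c (Fin.last r) A B e)
    (v w : ↥W) (hv : v.val ∈ A) (hw : w.val ∈ B) :
    ∃ P : ℕ → List ↥W,
      (∀ n, (P n).Nodup ∧ (P n).Chain' (fun x y : ↥W => c x.val y.val = Fin.last r) ∧
        (P n).head? = some v ∧ (P n).getLast? = some w) ∧
      (∀ m n, m ≠ n → P m ≠ P n ∧ ∀ x, x ∈ P m → x ∈ P n → x = v ∨ x = w) := by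
  classical
  apply build_paths Subtype.val
  intro X
  -- choose a matching edge avoiding Y
  set Y : Finset ℕ := X ∪ {v.val, w.val} with hY
  have hbad : {n | (e n).1 ∈ Y ∨ (e n).2 ∈ Y}.Finite := by
    have hsub : {n | (e n).1 ∈ Y ∨ (e n).2 ∈ Y} ⊆
        ⋃ t ∈ (Y : Set ℕ), ({n | (e n).1 = t} ∪ {n | (e n).2 = t}) := by
      rintro n (h | h)
      · exact Set.mem_biUnion h (Or.inl rfl)
      · exact Set.mem_biUnion h (Or.inr rfl)
    refine Set.Finite.subset (Set.Finite.biUnion Y.finite_toSet fun t _ => ?_) hsub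
    refine Set.Finite.union (Set.Subsingleton.finite ?_) (Set.Subsingleton.finite ?_)
    · intro m hm n hn
      by_contra hmn
      exact (he.2 m n hmn).1 (hm.trans hn.symm)
    · intro m hm n hn
      by_contra hmn
      exact (he.2 m n hmn).2.2.2 (hm.trans hn.symm)
  obtain ⟨n, hn⟩ := hbad.infinite_compl.nonempty
  simp only [Set.mem_compl_iff, Set.mem_setOf_eq, not_or] at hn
  obtain ⟨ha, hb⟩ := hn
  obtain ⟨haA, hbB, hab, -⟩ := he.1 n
  set a := (e n).1
  set b := (e n).2
  have haX : a ∉ X := fun h => ha (Finset.mem_union_left _ h)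
  have hbX : b ∉ X := fun h => hb (Finset.mem_union_left _ h)
  have hav : a ≠ v.val := fun h => ha (by simp [hY, h])
  have haw : a ≠ w.val := fun h => ha (by simp [hY, h])
  have hbv : b ≠ v.val := fun h => hb (by simp [hY, h])
  have hbw : b ≠ w.val := fun h => hb (by simp [hY, h])
  obtain ⟨L1, hL1nd, hL1ch, hL1h, hL1l, hL1av⟩ :=
    exists_path_avoiding hcA ⟨v.val, hv⟩ ⟨a, haA⟩ (fun h => hav (congrArg Subtype.val h).symm) X
  obtain ⟨L2, hL2nd, hL2ch, hL2h, hL2l, hL2av⟩ :=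
    exists_path_avoiding hcB ⟨b, hbB⟩ ⟨w.val, hw⟩ (fun h => hbw (congrArg Subtype.val h)) X
  let ιA : A → ↥W := fun x => ⟨x.val, hAW x.2⟩
  let ιB : B → ↥W := fun x => ⟨x.val, hBW x.2⟩
  have hιA : Function.Injective ιA := fun x y h => by have h2 := congrArg Subtype.val h; exact Subtype.ext h2
  have hιB : Function.Injective ιB := fun x y h => by have h2 := congrArg Subtype.val h; exact Subtype.ext h2
  refine ⟨L1.map ιA ++ L2.map ιB, ⟨?_, ?_, ?_, ?_⟩, ?_, ?_⟩
  · refine List.Nodup.append (hL1nd.map hιA) (hL2nd.map hιB) ?_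
    intro x hx1 hx2
    obtain ⟨y, hy, rfl⟩ := List.mem_map.mp hx1
    obtain ⟨z, hz, hzx⟩ := List.mem_map.mp hx2
    have : (y : ℕ) = (z : ℕ) := (congrArg Subtype.val hzx).symm
    exact hdisjAB.ne_of_mem y.2 z.2 this
  · refine List.isChain_append.mpr ?_
    refine ⟨List.isChain_map ιA |>.mpr hL1ch, List.isChain_map ιB |>.mpr hL2ch, ?_⟩
    intro x hx y hy
    rw [List.getLast?_map, hL1l] at hx
    rw [List.head?_map, hL2h] at hy
    simp only [Option.map_some, Option.mem_def, Option.some_inj] at hx hy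
    subst hx; subst hy
    exact hab
  · rw [List.head?_append, List.head?_map, hL1h]
    rfl
  · rw [List.getLast?_append, List.getLast?_map, hL2l]
    rfl
  · intro x hx hxv hxw
    rcases List.mem_append.mp hx with h | h
    · obtain ⟨y, hy, rfl⟩ := List.mem_map.mp h
      by_cases hya : y = ⟨a, haA⟩
      · subst hya; exact haX
      · refine hL1av y hy (fun h' => hxv ?_) hya
        subst h'; rfl
    · obtain ⟨y, hy, rfl⟩ := List.mem_map.mp h
      by_cases hyb : y = ⟨b, hbB⟩
      · subst hyb; exact hbX
      · refine hL2av y hy hyb (fun h' => hxw ?_)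
        subst h'; rfl
  · refine ⟨ιA ⟨a, haA⟩, List.mem_append.mpr (Or.inl ?_), ?_, ?_⟩
    · exact List.mem_map_of_mem (f := ιA) (List.mem_of_mem_getLast? (by rw [hL1l]; rfl))
    · exact fun h => hav (congrArg Subtype.val h)
    · exact fun h => haw (congrArg Subtype.val h)

/-- The same-side case: lift a path system inside `S` to the ambient set `W`. -/
lemma same_side {W S : Set ℕ} (hSW : S ⊆ W)
    (hc : StronglyCofinConnected (fun x y : S => c x.val y.val = Fin.last r))
    (v w : ↥W) (hv : v.val ∈ S) (hw : w.val ∈ S) (hvw : v ≠ w) :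
    ∃ P : ℕ → List ↥W,
      (∀ n, (P n).Nodup ∧ (P n).Chain' (fun x y : ↥W => c x.val y.val = Fin.last r) ∧
        (P n).head? = some v ∧ (P n).getLast? = some w) ∧
      (∀ m n, m ≠ n → P m ≠ P n ∧ ∀ x, x ∈ P m → x ∈ P n → x = v ∨ x = w) := by
  have hvw' : (⟨v.val, hv⟩ : S) ≠ ⟨w.val, hw⟩ :=
    fun h => by have h2 := congrArg Subtype.val h; exact hvw (Subtype.ext h2)
  obtain ⟨P, h1, h2⟩ := hc ⟨v.val, hv⟩ ⟨w.val, hw⟩ hvw'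
  let ι : S → ↥W := fun x => ⟨x.val, hSW x.2⟩
  have hι : Function.Injective ι := fun x y h => by have h2 := congrArg Subtype.val h; exact Subtype.ext h2
  refine ⟨fun n => (P n).map ι, ?_, ?_⟩
  · intro n
    refine ⟨(h1 n).1.map hι, (List.isChain_map ι).mpr (h1 n).2.1, ?_, ?_⟩
    · rw [List.head?_map, (h1 n).2.2.1]; rfl
    · rw [List.getLast?_map, (h1 n).2.2.2]; rfl
  · intro m n hmn
    constructor
    · intro heq
      exact (h2 m n hmn).1 (List.map_injective_iff.mpr hι heq)
    · intro x hxm hxn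
      obtain ⟨y, hy, rfl⟩ := List.mem_map.mp hxm
      obtain ⟨z, hz, hzy⟩ := List.mem_map.mp hxn
      have : z = y := hι hzy
      subst this
      rcases (h2 m n hmn).2 z hy hz with h | h
      · exact Or.inl (by rw [h])
      · exact Or.inr (by rw [h])

end Helpers

/-- Let `c` be an `(r+1)`-edge-colouring of the complete symmetric digraph on `ℕ`, and let
`U`, `U'` be disjoint infinite subsets of `ℕ` on each of which the edges of colour `r+1`
induce a strongly `<ℵ₀`-connected digraph. If there are infinite directed matchings in
colour `r+1` both from `U` to `U'` and from `U'` to `U`, then the edges of colour `r+1`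
induce a strongly `<ℵ₀`-connected digraph on `U ∪ U'`. -/
theorem union_stronglyCofinConnected_of_matchings (r : ℕ) (c : ℕ → ℕ → Fin (r + 1))
    (U U' : Set ℕ) (hU : U.Infinite) (hU' : U'.Infinite) (hdisj : Disjoint U U')
    (hcU : StronglyCofinConnected (fun x y : U => c x.val y.val = Fin.last r))
    (hcU' : StronglyCofinConnected (fun x y : U' => c x.val y.val = Fin.last r))
    (hM : ∃ e, IsInfiniteDirMatching c (Fin.last r) U U' e)
    (hM' : ∃ e, IsInfiniteDirMatching c (Fin.last r) U' U e) :
    StronglyCofinConnected (fun x y : ↥(U ∪ U') => c x.val y.val = Fin.last r) := by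
  obtain ⟨e, he⟩ := hM
  obtain ⟨e', he'⟩ := hM'
  intro v w hvw
  rcases v.2 with hv | hv <;> rcases w.2 with hw | hw
  · exact same_side Set.subset_union_left hcU v w hv hw hvw
  · exact cross_case Set.subset_union_left Set.subset_union_right hdisj hcU hcU' he v w hv hw
  · exact cross_case Set.subset_union_right Set.subset_union_left hdisj.symm hcU' hcU he' v w hv hw
  · exact same_side Set.subset_union_right hcU' v w hv hw hvw
end

section
/- Let c : E(K↔_ℕ) → [r+1] be an edge-colouring of the complete symmetric digraph on ℕ, let u be a vertex and let U' be an infinite subset of ℕ not containing u such that the subgraph induced on U' by the edges of colour r+1 is strongly <ℵ₀-connected. If both the set of out-neighbours of u in U' in colour r+1 and the set of in-neighbours of u in U' in colour r+1 are infinite, then the subgraph induced on {u} ∪ U' by the edges of colour r+1 is strongly <ℵ₀-connected. -/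
private theorem avoid_path {V : Type*} {E : V → V → Prop} (hc :
    ∀ v w : V, v ≠ w → ∃ P : ℕ → List V,
    (∀ n, (P n).Nodup ∧ (P n).Chain' E ∧ (P n).head? = some v ∧ (P n).getLast? = some w) ∧
    (∀ m n, m ≠ n → P m ≠ P n ∧ ∀ x, x ∈ P m → x ∈ P n → x = v ∨ x = w))
    {v w : V} (hvw : v ≠ w) {F : Set V} (hF : F.Finite) (hv : v ∉ F) (hw : w ∉ F) :
    ∃ L : List V, L.Nodup ∧ L.Chain' E ∧ L.head? = some v ∧ L.getLast? = some w ∧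
      ∀ x ∈ L, x ∉ F := by
  obtain ⟨P, h1, h2⟩ := hc v w hvw
  have hBad : {n : ℕ | ∃ x ∈ F, x ∈ P n}.Finite := by
    have : {n : ℕ | ∃ x ∈ F, x ∈ P n} ⊆ ⋃ x ∈ F, {n : ℕ | x ∈ P n} := by
      intro n ⟨x, hxF, hxP⟩
      exact Set.mem_biUnion hxF hxP
    refine Set.Finite.subset (Set.Finite.biUnion hF fun x hx => ?_) this
    apply Set.Subsingleton.finite
    intro m hm n hn
    by_contra hmn
    rcases (h2 m n hmn).2 x hm hn with h' | h'
    · exact hv (h' ▸ hx)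
    · exact hw (h' ▸ hx)
  obtain ⟨n, hn⟩ := hBad.infinite_compl.nonempty
  exact ⟨P n, (h1 n).1, (h1 n).2.1, (h1 n).2.2.1, (h1 n).2.2.2,
    fun x hx hxF => hn ⟨x, hxF, hx⟩⟩

private theorem buildPaths {V : Type*} {E : V → V → Prop} {v w : V}
    (h : ∀ F : Set V, F.Finite → v ∉ F → w ∉ F →
      ∃ L : List V, L.Nodup ∧ L.Chain' E ∧ L.head? = some v ∧ L.getLast? = some w ∧
        (∃ x ∈ L, x ≠ v ∧ x ≠ w) ∧ ∀ x ∈ L, x ∉ F) :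
    ∃ P : ℕ → List V,
      (∀ n, (P n).Nodup ∧ (P n).Chain' E ∧ (P n).head? = some v ∧ (P n).getLast? = some w) ∧
      (∀ m n, m ≠ n → P m ≠ P n ∧ ∀ x, x ∈ P m → x ∈ P n → x = v ∨ x = w) := by
  classical
  set F : List (List V) → Set V :=
    fun prevs => {x | (∃ L ∈ prevs, x ∈ L) ∧ x ≠ v ∧ x ≠ w} with hFdef
  have hfin : ∀ prevs, (F prevs).Finite := by
    intro prevs
    apply Set.Finite.subset (List.finite_toSet prevs.flatten)
    intro x hx
    simp only [List.mem_flatten]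
    exact hx.1
  have hvF : ∀ prevs, v ∉ F prevs := fun prevs hx => hx.2.1 rfl
  have hwF : ∀ prevs, w ∉ F prevs := fun prevs hx => hx.2.2 rfl
  obtain ⟨next, hspec⟩ := Classical.axiomOfChoice
    (fun prevs => h (F prevs) (hfin prevs) (hvF prevs) (hwF prevs))
  obtain ⟨Q, hQsucc⟩ : ∃ Q : ℕ → List (List V), ∀ n, Q (n + 1) = next (Q n) :: Q n :=
    ⟨fun n => Nat.rec [] (fun _ prevs => next prevs :: prevs) n, fun n => rfl⟩
  have hmem : ∀ m n, m < n → next (Q m) ∈ Q n := by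
    intro m n hmn
    induction n with
    | zero => omega
    | succ k ih =>
      rw [hQsucc]
      rcases Nat.lt_succ_iff_lt_or_eq.mp hmn with h' | h'
      · exact List.mem_cons_of_mem _ (ih h')
      · subst h'; exact List.mem_cons_self
  have key : ∀ m n, m < n → next (Q n) ≠ next (Q m) ∧
      ∀ x, x ∈ next (Q m) → x ∈ next (Q n) → x = v ∨ x = w := by
    intro m n hmn
    have hPm := hmem m n hmn
    have hs := hspec (Q n)
    have hdisj : ∀ x, x ∈ next (Q m) → x ∈ next (Q n) → x = v ∨ x = w := by
      intro x hxm hxn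
      by_contra hx
      push_neg at hx
      exact hs.2.2.2.2.2 x hxn ⟨⟨next (Q m), hPm, hxm⟩, hx.1, hx.2⟩
    obtain ⟨x₀, hx₀, hx₀v, hx₀w⟩ := hs.2.2.2.2.1
    refine ⟨fun heq => ?_, hdisj⟩
    rcases hdisj x₀ (heq ▸ hx₀) hx₀ with h' | h'
    · exact hx₀v h'
    · exact hx₀w h'
  refine ⟨fun n => next (Q n), fun n => ?_, fun m n hmn => ?_⟩
  · have hs := hspec (Q n)
    exact ⟨hs.1, hs.2.1, hs.2.2.1, hs.2.2.2.1⟩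
  · rcases Nat.lt_or_ge m n with h' | h'
    · exact ⟨((key m n h').1).symm, (key m n h').2⟩
    · have h'' : n < m := lt_of_le_of_ne h' (Ne.symm hmn)
      exact ⟨(key n m h'').1, fun x hxm hxn => (key n m h'').2 x hxn hxm⟩

/-- Let `c` be an `(r+1)`-edge-colouring of the complete symmetric digraph on `ℕ`, let `u`
be a vertex and `U'` an infinite subset of `ℕ` not containing `u` on which the edges of
colour `r+1` induce a strongly `<ℵ₀`-connected digraph. If `u` has infinitely many
out-neighbours in `U'` in colour `r+1` and infinitely many in-neighbours in `U'` in colour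
`r+1`, then the edges of colour `r+1` induce a strongly `<ℵ₀`-connected digraph on
`{u} ∪ U'`. -/
theorem insert_stronglyCofinConnected (r : ℕ) (c : ℕ → ℕ → Fin (r + 1)) (u : ℕ)
    (U' : Set ℕ) (hU' : U'.Infinite) (hu : u ∉ U')
    (hc : StronglyCofinConnected (fun x y : U' => c x.val y.val = Fin.last r))
    (hout : {w ∈ U' | c u w = Fin.last r}.Infinite)
    (hin : {w ∈ U' | c w u = Fin.last r}.Infinite) :
    StronglyCofinConnected (fun x y : ↥(insert u U') => c x.val y.val = Fin.last r) := by
  classical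
  intro v w hvw
  have hvalne : v.val ≠ w.val := fun h => hvw (Subtype.ext h)
  set ι : U' → ↥(insert u U') := fun a => ⟨a.val, Set.mem_insert_of_mem u a.2⟩ with hι
  have hιinj : Function.Injective ι := fun a b hab =>
    Subtype.ext (congrArg (Subtype.val : ↥(insert u U') → ℕ) hab)
  rcases Set.mem_insert_iff.mp v.2 with hv | hv
  · rcases Set.mem_insert_iff.mp w.2 with hw | hw
    · exact absurd (Subtype.ext (hv.trans hw.symm)) hvw
    · -- v = u, w ∈ U'
      apply buildPaths
      intro F hF hvF hwF
      have hinf : ({a ∈ U' | c u a = Fin.last r} \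
          insert w.val (Subtype.val '' F)).Infinite :=
        hout.diff ((hF.image _).insert _)
      obtain ⟨a, ha, hna⟩ := hinf.nonempty
      have haw : a ≠ w.val := fun h => hna (h ▸ Set.mem_insert _ _)
      have haF : ι ⟨a, ha.1⟩ ∉ F := fun h => hna (Set.mem_insert_of_mem _ ⟨_, h, rfl⟩)
      have hwι : ι ⟨w.val, hw⟩ = w := Subtype.ext rfl
      obtain ⟨L', hnd, hch, hhd, hlt, havd⟩ := avoid_path hc
        (v := ⟨a, ha.1⟩) (w := ⟨w.val, hw⟩)
        (fun h => haw (congrArg Subtype.val h))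
        (F := ι ⁻¹' F) (hF.preimage hιinj.injOn) haF
        (fun h => hwF (hwι ▸ h))
      rcases L' with _ | ⟨b, t⟩
      · simp at hhd
      have hb : b = ⟨a, ha.1⟩ := by simpa using hhd
      refine ⟨v :: (b :: t).map ι, ?_, ?_, rfl, ?_, ?_, ?_⟩
      · rw [List.nodup_cons]
        refine ⟨?_, hnd.map hιinj⟩
        intro hmem
        obtain ⟨y, _, hy⟩ := List.mem_map.mp hmem
        exact hu (hv ▸ congrArg Subtype.val hy ▸ y.2)
      · unfold List.Chain'; rw [List.isChain_cons]
        constructor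
        · intro y hy
          simp only [List.map_cons, List.head?_cons, Option.mem_def, Option.some_inj] at hy
          subst hy hb
          show c v.val a = Fin.last r
          rw [hv]; exact ha.2
        · rw [List.isChain_map]; exact hch
      · show ((v :: (b :: t).map ι)).getLast? = some w
        rw [List.map_cons, List.getLast?_cons_cons, ← List.map_cons,
          List.getLast?_map, hlt, Option.map_some, hwι]
      · refine ⟨ι b, by simp, ?_, ?_⟩
        · intro h
          apply hu
          have : (ι b).val = v.val := congrArg Subtype.val h
          rw [hv] at this; rw [← this]; exact b.2
        · intro h
          apply haw
          have h2 : (ι b).val = w.val := congrArg (Subtype.val : ↥(insert u U') → ℕ) h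
          rw [hb] at h2
          exact h2
      · intro x hx
        rcases List.mem_cons.mp hx with h' | h'
        · exact h' ▸ hvF
        · obtain ⟨y, hy, rfl⟩ := List.mem_map.mp h'
          exact havd y hy
  · rcases Set.mem_insert_iff.mp w.2 with hw | hw
    · -- v ∈ U', w = u
      apply buildPaths
      intro F hF hvF hwF
      have hinf : ({a ∈ U' | c a u = Fin.last r} \
          insert v.val (Subtype.val '' F)).Infinite :=
        hin.diff ((hF.image _).insert _)
      obtain ⟨b, hb, hnb⟩ := hinf.nonempty
      have hbv : b ≠ v.val := fun h => hnb (h ▸ Set.mem_insert _ _)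
      have hbF : ι ⟨b, hb.1⟩ ∉ F := fun h => hnb (Set.mem_insert_of_mem _ ⟨_, h, rfl⟩)
      have hvι : ι ⟨v.val, hv⟩ = v := Subtype.ext rfl
      obtain ⟨L', hnd, hch, hhd, hlt, havd⟩ := avoid_path hc
        (v := ⟨v.val, hv⟩) (w := ⟨b, hb.1⟩)
        (fun h => hbv (congrArg Subtype.val h).symm)
        (F := ι ⁻¹' F) (hF.preimage hιinj.injOn) (fun h => hvF (hvι ▸ h)) hbF
      have hbmem : ι ⟨b, hb.1⟩ ∈ L'.map ι := by
        obtain ⟨hne, heq⟩ := List.mem_getLast?_eq_getLast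
          (show (⟨b, hb.1⟩ : U') ∈ L'.getLast? from hlt)
        exact List.mem_map_of_mem (f := ι) (heq ▸ L'.getLast_mem hne)
      refine ⟨L'.map ι ++ [w], ?_, ?_, ?_, List.getLast?_concat, ?_, ?_⟩
      · refine (hnd.map hιinj).append (List.nodup_singleton w) ?_
        intro x hx hx'
        rw [List.mem_singleton] at hx'
        obtain ⟨y, _, hy⟩ := List.mem_map.mp hx
        exact hu (hw ▸ (hx' ▸ hy : ι y = w) ▸ y.2)
      · unfold List.Chain'; rw [List.isChain_append]
        refine ⟨List.isChain_map ι |>.mpr hch, List.isChain_singleton w, ?_⟩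
        intro x hx y hy
        rw [List.getLast?_map, hlt, Option.map_some] at hx
        simp only [List.head?_cons, Option.mem_def, Option.some_inj] at hx hy
        subst hx; subst hy
        show c b w.val = Fin.last r
        rw [hw]; exact hb.2
      · rcases L' with _ | ⟨b', t⟩
        · simp at hhd
        have hb' : b' = ⟨v.val, hv⟩ := by simpa using hhd
        simp only [List.map_cons, List.cons_append, List.head?_cons, hb', hvι]
      · refine ⟨ι ⟨b, hb.1⟩, List.mem_append_left _ hbmem, ?_, ?_⟩
        · intro h
          exact hbv (congrArg Subtype.val h)
        · intro h
          exact hu (hw ▸ congrArg Subtype.val h ▸ hb.1)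
      · intro x hx
        rcases List.mem_append.mp hx with h' | h'
        · obtain ⟨y, hy, rfl⟩ := List.mem_map.mp h'
          exact havd y hy
        · rw [List.mem_singleton] at h'
          exact h' ▸ hwF
    · -- v, w ∈ U'
      obtain ⟨P, h1, h2⟩ := hc ⟨v.val, hv⟩ ⟨w.val, hw⟩
        (fun h => hvalne (congrArg (Subtype.val : ↥U' → ℕ) h))
      have hiv : ι ⟨v.val, hv⟩ = v := Subtype.ext rfl
      have hiw : ι ⟨w.val, hw⟩ = w := Subtype.ext rfl
      refine ⟨fun n => (P n).map ι, fun n => ?_, fun m n hmn => ?_⟩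
      · obtain ⟨hn1, hn2, hn3, hn4⟩ := h1 n
        refine ⟨hn1.map hιinj, ?_, ?_, ?_⟩
        · unfold List.Chain'; rw [List.isChain_map]; exact hn2
        · rw [List.head?_map, hn3, Option.map_some, hiv]
        · rw [List.getLast?_map, hn4, Option.map_some, hiw]
      · obtain ⟨hne, hdisj⟩ := h2 m n hmn
        refine ⟨fun h => hne (List.map_injective_iff.mpr hιinj h), ?_⟩
        intro x hxm hxn
        obtain ⟨a, ha, rfl⟩ := List.mem_map.mp hxm
        obtain ⟨b, hb, hba⟩ := List.mem_map.mp hxn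
        rw [hιinj hba] at hb
        rcases hdisj a ha hb with h' | h'
        · left; rw [h', hiv]
        · right; rw [h', hiw]
end

section
/- Let the edge set of the complete graph K_n be partitioned into r spanning subgraphs G_1, ..., G_r. Then n ≤ ∏_{i≤r} χ(G_i), where χ(G_i) denotes the chromatic number of G_i. -/
/-- If the edge set of the complete graph on a finite vertex type `V` is partitioned into
`r` spanning subgraphs `G 1, …, G r` (every edge of the complete graph lies in exactly one
`G i`), then `n ≤ ∏ i, χ(G i)`, where `n = |V|` and `χ` is the chromatic number. -/
theorem card_le_prod_chromaticNumber {V : Type*} [Fintype V] (r : ℕ)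
    (G : Fin r → SimpleGraph V)
    (hpart : ∀ u v : V, u ≠ v → ∃! i : Fin r, (G i).Adj u v) :
    (Fintype.card V : ℕ∞) ≤ ∏ i, (G i).chromaticNumber := by
  classical
  set k : Fin r → ℕ := fun i => ((G i).chromaticNumber).toNat with hk
  have hcol : ∀ i, (G i).Colorable (k i) := fun i =>
    (G i).colorable_chromaticNumber_of_fintype
  have C : ∀ i, (G i).Coloring (Fin (k i)) := fun i => (hcol i).some
  have hinj : Function.Injective (fun v : V => fun i => C i v) := by
    intro u v huv
    by_contra hne
    obtain ⟨i, hi, -⟩ := hpart u v hne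
    exact (C i).valid hi (congrFun huv i)
  have hcard : Fintype.card V ≤ ∏ i, k i := by
    calc Fintype.card V ≤ Fintype.card (∀ i, Fin (k i)) :=
          Fintype.card_le_of_injective _ hinj
      _ = ∏ i, k i := by simp
  have hne : ∀ i, (G i).chromaticNumber ≠ ⊤ := fun i =>
    ((hcol i).chromaticNumber_le.trans_lt (WithTop.coe_lt_top _)).ne
  have heq : ∀ i, (G i).chromaticNumber = (k i : ℕ∞) := fun i =>
    (ENat.coe_toNat (hne i)).symm
  calc (Fintype.card V : ℕ∞) ≤ ((∏ i, k i : ℕ) : ℕ∞) := by exact_mod_cast hcard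
    _ = ∏ i, ((k i : ℕ) : ℕ∞) := by push_cast; rfl
    _ = ∏ i, (G i).chromaticNumber := by simp [heq]
end
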